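/- arXiv:1906.08077 — 3 statements merged into one kernel-verified Lean document; each statement's English description precedes it below -/
import Mathlib

section
/- Let (y, z, θ) solve the translator system with μ = 0, λ ≠ 0 and f(θ₀) ≠ 0, where f(θ) = −(θ − θ₀ + λ)·sin θ. Suppose θ(s) → θ₀ − λ as s → +∞ and set σ₁ = sin(θ₀ − λ), σ₂ = cos(θ₀ − λ), assuming 0 < σ₁ < 1. Then z(s)/s → σ₁ as s → +∞, and e^{−σ₁ s}·y(s) converges to a finite nonzero limit with the same sign as σ₂ (so the profile curve is asymptotic to a logarithmic curve z = log(y₀ ± y) + z₀). -/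
open Real Filter Topology

/-- L'Hôpital-type lemma at infinity. -/
lemma my_lhopital (f G f' G' : ℝ → ℝ)
    (hf : ∀ s, HasDerivAt f (f' s) s) (hG : ∀ s, HasDerivAt G (G' s) s)
    (hG' : ∀ᶠ s in atTop, 0 < G' s)
    (hGtop : Tendsto G atTop atTop) (K : ℝ)
    (hr : Tendsto (fun s => f' s / G' s) atTop (𝓝 K)) :
    Tendsto (fun s => f s / G s) atTop (𝓝 K) := by
  rw [Metric.tendsto_atTop]
  intro ε hε
  have hε2 : (0:ℝ) < ε/2 := by linarith
  obtain ⟨M₀, hM₀⟩ := Metric.tendsto_atTop.mp hr (ε/2) hε2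
  obtain ⟨M₁, hM₁⟩ := eventually_atTop.mp hG'
  set M := max M₀ M₁ with hM
  have hkey : ∀ s, M ≤ s → |f' s - K * G' s| ≤ ε/2 * G' s := by
    intro s hs
    have hpos : 0 < G' s := hM₁ s (le_trans (le_max_right _ _) hs)
    have hd := hM₀ s (le_trans (le_max_left _ _) hs)
    rw [Real.dist_eq] at hd
    have heq : f' s - K * G' s = (f' s / G' s - K) * G' s := by
      field_simp
    rw [heq, abs_mul, abs_of_pos hpos]
    exact mul_le_mul_of_nonneg_right (le_of_lt hd) (le_of_lt hpos)
  set u : ℝ → ℝ := fun s => f s - K * G s with hu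
  have hu' : ∀ s, HasDerivAt u (f' s - K * G' s) s := fun s =>
    (hf s).sub ((hG s).const_mul K)
  -- monotonicity of ε/2 • G ± u on [M, ∞)
  have hmono : ∀ (c : ℝ), (∀ s, M ≤ s → 0 ≤ ε/2 * G' s + c * (f' s - K * G' s)) →
      MonotoneOn (fun s => ε/2 * G s + c * u s) (Set.Ici M) := by
    intro c hc
    have hder : ∀ s, HasDerivAt (fun s => ε/2 * G s + c * u s)
        (ε/2 * G' s + c * (f' s - K * G' s)) s := fun s =>
      ((hG s).const_mul (ε/2)).add ((hu' s).const_mul c)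
    apply monotoneOn_of_deriv_nonneg (convex_Ici M)
    · exact fun x _ => ((hder x).continuousAt).continuousWithinAt
    · exact fun x _ => ((hder x).differentiableAt).differentiableWithinAt
    · intro x hx
      rw [(hder x).deriv]
      rw [interior_Ici] at hx
      exact hc x (le_of_lt hx)
  have h1 : MonotoneOn (fun s => ε/2 * G s + (-1) * u s) (Set.Ici M) := by
    apply hmono
    intro s hs
    have := hkey s hs
    have h2 := abs_le.mp this
    linarith [h2.1, h2.2]
  have h2 : MonotoneOn (fun s => ε/2 * G s + 1 * u s) (Set.Ici M) := by
    apply hmono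
    intro s hs
    have h2 := abs_le.mp (hkey s hs)
    linarith [h2.1, h2.2]
  set C := |u M| + ε/2 * |G M| with hC
  have hCnn : 0 ≤ C := by positivity
  clear_value C u M
  have husbound : ∀ s, M ≤ s → |u s| ≤ C + ε/2 * G s := by
    intro s hs
    have e1 := h1 (Set.self_mem_Ici) hs hs
    have e2 := h2 (Set.self_mem_Ici) hs hs
    simp only at e1 e2
    have b1 : -|G M| ≤ G M := neg_abs_le _
    have b2 : -|u M| ≤ u M := neg_abs_le _
    have b3 : u M ≤ |u M| := le_abs_self _
    have b4 : ε/2 * (-|G M|) ≤ ε/2 * G M := mul_le_mul_of_nonneg_left b1 (le_of_lt hε2)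
    rw [abs_le]
    constructor <;> linarith
  obtain ⟨N₀, hN₀⟩ := eventually_atTop.mp (hGtop.eventually_ge_atTop (max 1 (2*(C+1)/ε)))
  refine ⟨max M N₀, fun s hs => ?_⟩
  have hsM : M ≤ s := le_trans (le_max_left _ _) hs
  have hGge := hN₀ s (le_trans (le_max_right _ _) hs)
  have hG1 : (1:ℝ) ≤ G s := le_trans (le_max_left _ _) hGge
  have hGC : 2*(C+1)/ε ≤ G s := le_trans (le_max_right _ _) hGge
  have hGpos : 0 < G s := lt_of_lt_of_le one_pos hG1
  rw [Real.dist_eq]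
  have heq : f s / G s - K = u s / G s := by
    field_simp [hu]; simp only [hu]; ring
  rw [heq, abs_div, abs_of_pos hGpos]
  have hb := husbound s hsM
  have hlt : C / G s < ε / 2 := by
    rw [div_lt_iff₀ hGpos]
    have : ε/2 * (2*(C+1)/ε) ≤ ε/2 * G s := by
      apply mul_le_mul_of_nonneg_left hGC (le_of_lt hε2)
    have hcc : ε/2 * (2*(C+1)/ε) = C + 1 := by field_simp
    linarith
  calc |u s| / G s ≤ (C + ε/2 * G s) / G s := by
        gcongr
    _ = C / G s + ε/2 := by
        rw [add_div, mul_div_assoc, div_self (ne_of_gt hGpos), mul_one]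
    _ < ε/2 + ε/2 := by linarith
    _ = ε := by ring

lemma my_sin_lip (a b : ℝ) : |Real.sin a - Real.sin b| ≤ |a - b| := by
  rw [Real.sin_sub_sin]
  have h1 : |Real.sin ((a - b)/2)| ≤ |(a-b)/2| := Real.abs_sin_le_abs
  have h2 : |Real.cos ((a + b)/2)| ≤ 1 := Real.abs_cos_le_one _
  calc |2 * Real.sin ((a - b)/2) * Real.cos ((a + b)/2)|
      = 2 * |Real.sin ((a-b)/2)| * |Real.cos ((a+b)/2)| := by
        rw [abs_mul, abs_mul]; simp [abs_of_nonneg]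
    _ ≤ 2 * |(a-b)/2| * 1 := by
        apply mul_le_mul ?_ h2 (abs_nonneg _) (by positivity)
        exact mul_le_mul_of_nonneg_left h1 (by norm_num)
    _ = |a - b| := by rw [abs_div, abs_two]; ring

theorem stmt16
    (lam μ θ₀ : ℝ) (y z θ : ℝ → ℝ)
    (hy0 : y 0 = 0) (hz0 : z 0 = 0) (hθ0 : θ 0 = θ₀)
    (hy : ∀ s : ℝ, HasDerivAt y (Real.exp (z s) * Real.cos (θ s)) s)
    (hz : ∀ s : ℝ, HasDerivAt z (Real.sin (θ s)) s)
    (hθ : ∀ s : ℝ, HasDerivAt θ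
      (-lam * Real.exp (-z s) * Real.sin (θ s) +
        μ * (Real.cos (θ s) - y s * Real.exp (-z s) * Real.sin (θ s))) s)
    (hμ : μ = 0) (hlam : lam ≠ 0)
    (hne : μ * Real.cos θ₀ - (θ₀ - θ₀ + lam) * Real.sin θ₀ ≠ 0)
    (hconv : Tendsto θ atTop (𝓝 (θ₀ - lam)))
    (σ₁ σ₂ : ℝ) (hσ₁ : σ₁ = Real.sin (θ₀ - lam)) (hσ₂ : σ₂ = Real.cos (θ₀ - lam))
    (hσ : 0 < σ₁ ∧ σ₁ < 1) :
    Tendsto (fun s => z s / s) atTop (𝓝 σ₁) ∧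
    (∃ L : ℝ, 0 < L * σ₂ ∧
      Tendsto (fun s => Real.exp (-(σ₁ * s)) * y s) atTop (𝓝 L)) := by
  obtain ⟨hσ1pos, hσ1lt⟩ := hσ
  subst hμ
  -- conserved quantity: θ s - lam * exp (-z s) = θ₀ - lam
  have hexpz : ∀ s, HasDerivAt (fun s => Real.exp (-z s))
      (Real.exp (-z s) * -(Real.sin (θ s))) s := by
    intro s
    exact ((hz s).neg).exp
  have hconst : ∀ s, θ s - lam * Real.exp (-z s) = θ₀ - lam := by
    have hF : ∀ s, HasDerivAt (fun s => θ s - lam * Real.exp (-z s)) 0 s := by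
      intro s
      have := (hθ s).sub ((hexpz s).const_mul lam)
      exact this.congr_deriv (by ring)
    intro s
    have := is_const_of_deriv_eq_zero (f := fun s => θ s - lam * Real.exp (-z s))
      (fun x => (hF x).differentiableAt) (fun x => (hF x).deriv) s 0
    rw [this, hz0, hθ0]
    simp
  -- sin θ → σ₁
  have hsin : Tendsto (fun s => Real.sin (θ s)) atTop (𝓝 σ₁) := by
    rw [hσ₁]
    exact (Real.continuous_sin.continuousAt.tendsto).comp hconv
  have hcos : Tendsto (fun s => Real.cos (θ s)) atTop (𝓝 σ₂) := by
    rw [hσ₂]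
    exact (Real.continuous_cos.continuousAt.tendsto).comp hconv
  -- Step B : z s / s → σ₁
  have hB : Tendsto (fun s => z s / s) atTop (𝓝 σ₁) := by
    have := my_lhopital z id (fun s => Real.sin (θ s)) (fun _ => 1)
      hz (fun s => hasDerivAt_id s) (Eventually.of_forall (fun s => one_pos))
      tendsto_id σ₁ (by simpa using hsin)
    simpa using this
  refine ⟨hB, ?_⟩
  -- eventually z s ≥ σ₁/2 * s
  have hzge : ∀ᶠ s in atTop, σ₁/2 * s ≤ z s := by
    have h1 : ∀ᶠ s in atTop, σ₁/2 < z s / s := hB.eventually_const_lt (by linarith)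
    have h2 : ∀ᶠ s in atTop, (0:ℝ) < s := eventually_gt_atTop 0
    filter_upwards [h1, h2] with s hs1 hs2
    rw [lt_div_iff₀ hs2] at hs1
    linarith
  obtain ⟨a, ha⟩ := eventually_atTop.mp hzge
  -- Step C : z s - σ₁ s converges
  set k := σ₁/2 with hk
  have hkpos : 0 < k := by rw [hk]; linarith

  set b := |lam| with hb
  have hbpos : 0 < b := abs_pos.mpr hlam
  clear_value k b
  set h : ℝ → ℝ := fun s => z s - σ₁ * s with hhdef
  have hh : ∀ s, HasDerivAt h (Real.sin (θ s) - σ₁) s := by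
    intro s
    exact (hz s).sub ((hasDerivAt_id s).const_mul σ₁ |>.congr_deriv (by ring))
  have hbound : ∀ s, a ≤ s → |Real.sin (θ s) - σ₁| ≤ b * Real.exp (-(k * s)) := by
    intro s hs
    have h1 : |Real.sin (θ s) - σ₁| ≤ |θ s - (θ₀ - lam)| := by
      rw [hσ₁]
      exact my_sin_lip _ _
    have h2 : θ s - (θ₀ - lam) = lam * Real.exp (-z s) := by
      have := hconst s
      linarith
    have h3 : Real.exp (-z s) ≤ Real.exp (-(k * s)) := by
      apply Real.exp_le_exp.mpr
      have := ha s hs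
      linarith
    calc |Real.sin (θ s) - σ₁| ≤ |θ s - (θ₀ - lam)| := h1
      _ = b * Real.exp (-z s) := by
          rw [h2, abs_mul, abs_of_pos (Real.exp_pos _), hb]
      _ ≤ b * Real.exp (-(k * s)) := by
          exact mul_le_mul_of_nonneg_left h3 hbpos.le
  set F : ℝ → ℝ := fun s => -(b/k) * Real.exp (-(k*s)) with hFdef
  have hF : ∀ s, HasDerivAt F (b * Real.exp (-(k*s))) s := by
    intro s
    have h1 : HasDerivAt (fun s : ℝ => -(k*s)) (-k) s := by
      simpa using (hasDerivAt_id s).const_mul (-k)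
    have := (h1.exp).const_mul (-(b/k))
    exact this.congr_deriv (by field_simp)
  have hFneg : ∀ s, F s ≤ 0 := by
    intro s
    rw [hFdef]
    simp only
    have : 0 < (b/k) * Real.exp (-(k*s)) := by positivity
    linarith
  clear_value F h
  -- monotone functions
  have hmono : ∀ (c : ℝ), c = 1 ∨ c = -1 →
      MonotoneOn (fun s => F s + c * h s) (Set.Ici a) := by
    intro c hc
    have hder : ∀ s, HasDerivAt (fun s => F s + c * h s)
        (b * Real.exp (-(k*s)) + c * (Real.sin (θ s) - σ₁)) s := fun s =>
      (hF s).add ((hh s).const_mul c)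
    apply monotoneOn_of_deriv_nonneg (convex_Ici a)
    · exact fun x _ => ((hder x).continuousAt).continuousWithinAt
    · exact fun x _ => ((hder x).differentiableAt).differentiableWithinAt
    · intro x hx
      rw [interior_Ici] at hx
      rw [(hder x).deriv]
      have hB2 := abs_le.mp (hbound x (le_of_lt hx))
      rcases hc with hc | hc <;> rw [hc] <;> linarith [hB2.1, hB2.2]
  have hm1 := hmono (-1) (Or.inr rfl)
  have hm2 := hmono 1 (Or.inl rfl)
  -- h is bounded above on Ici a
  have hub : ∀ s, a ≤ s → F s + 1 * h s ≤ h a + (b/k) * Real.exp (-(k*a)) := by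
    intro s hs
    have e1 := hm1 (Set.self_mem_Ici) hs hs
    simp only at e1
    have hFa : F a = -(b/k) * Real.exp (-(k*a)) := by rw [hFdef]
    have := hFneg s
    -- e1 : F a - h a ≤ F s - h s  ⇒ h s ≤ h a + F s - F a
    linarith [hFneg s]
  -- the monotone function F + h tends to a limit
  have hexists : ∃ c, Tendsto h atTop (𝓝 c) := by
    set w : ℝ → ℝ := fun s => F (max s a) + 1 * h (max s a) with hwdef
    have hwmono : Monotone w := by
      intro s t hst
      exact hm2 (le_max_right s a) (le_max_right t a) (max_le_max hst (le_refl a))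
    have hwbdd : BddAbove (Set.range w) := by
      refine ⟨h a + (b/k) * Real.exp (-(k*a)), ?_⟩
      rintro x ⟨s, rfl⟩
      exact hub (max s a) (le_max_right s a)
    have hwt := tendsto_atTop_ciSup hwmono hwbdd
    have hFh : Tendsto (fun s => F s + 1 * h s) atTop (𝓝 (⨆ i, w i)) := by
      apply hwt.congr'
      filter_upwards [eventually_ge_atTop a] with s hs
      rw [hwdef]
      simp only [max_eq_left hs]
    have hFtend : Tendsto F atTop (𝓝 0) := by
      rw [hFdef]
      have h1 : Tendsto (fun s : ℝ => -(k*s)) atTop atBot := by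
        apply tendsto_neg_atBot_iff.mpr
        exact (tendsto_const_mul_atTop_of_pos hkpos).mpr tendsto_id
      have := Real.tendsto_exp_atBot.comp h1
      simpa using this.const_mul (-(b/k))
    refine ⟨(⨆ i, w i) - 0, ?_⟩
    have := hFh.sub hFtend
    apply this.congr
    intro s
    simp
  obtain ⟨c, hc⟩ := hexists
  -- Step D
  have hGpos : ∀ s : ℝ, (0:ℝ) < σ₁ * Real.exp (σ₁ * s) := by
    intro s; positivity
  have hGD : ∀ s : ℝ, HasDerivAt (fun s => Real.exp (σ₁ * s)) (σ₁ * Real.exp (σ₁ * s)) s := by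
    intro s
    have h1 : HasDerivAt (fun s : ℝ => σ₁ * s) σ₁ s := by
      simpa using (hasDerivAt_id s).const_mul σ₁
    have := h1.exp
    convert this using 1
    ring
  have hGtop : Tendsto (fun s : ℝ => Real.exp (σ₁ * s)) atTop atTop := by
    apply Real.tendsto_exp_atTop.comp
    exact (tendsto_const_mul_atTop_of_pos hσ1pos).mpr tendsto_id
  set L := Real.exp c * σ₂ / σ₁ with hL
  have hratio : Tendsto (fun s => (Real.exp (z s) * Real.cos (θ s)) /
      (σ₁ * Real.exp (σ₁ * s))) atTop (𝓝 L) := by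
    have heq : ∀ s, (Real.exp (z s) * Real.cos (θ s)) / (σ₁ * Real.exp (σ₁ * s))
        = Real.exp (h s) * Real.cos (θ s) / σ₁ := by
      intro s
      have : Real.exp (z s) = Real.exp (h s) * Real.exp (σ₁ * s) := by
        rw [← Real.exp_add, hhdef]
        congr 1
        simp
      rw [this]
      rw [div_eq_div_iff (by positivity) (by linarith)]
      ring
    have ht : Tendsto (fun s => Real.exp (h s) * Real.cos (θ s) / σ₁) atTop
        (𝓝 (Real.exp c * σ₂ / σ₁)) := by
      exact (((Real.continuous_exp.continuousAt.tendsto).comp hc).mul hcos).div_const σ₁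
    rw [hL]
    exact ht.congr (fun s => (heq s).symm)
  have hD := my_lhopital y (fun s => Real.exp (σ₁ * s))
    (fun s => Real.exp (z s) * Real.cos (θ s)) (fun s => σ₁ * Real.exp (σ₁ * s))
    hy hGD (Eventually.of_forall hGpos) hGtop L hratio
  refine ⟨L, ?_, ?_⟩
  · -- 0 < L * σ₂
    have hσ2ne : σ₂ ^ 2 = 1 - σ₁ ^ 2 := by
      have := Real.sin_sq_add_cos_sq (θ₀ - lam)
      rw [← hσ₁, ← hσ₂] at this
      nlinarith
    have h1 : 0 < σ₂ ^ 2 := by nlinarith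
    have : L * σ₂ = Real.exp c * σ₂ ^ 2 / σ₁ := by
      rw [hL]; ring
    rw [this]
    positivity
  · apply hD.congr
    intro s
    rw [Real.exp_neg]
    rw [div_eq_mul_inv, mul_comm]
end

section
/- Let (y, z, θ) solve the translator system with μ ≠ 0 and f(θ₀) ≠ 0, where f(θ) = μ·cos θ − (θ − θ₀ + λ)·sin θ. Then the limit θ⁺ = lim_{s→+∞} θ(s) exists and satisfies sin θ⁺ ≠ 0; consequently z(s)/s → sin θ⁺ as s → +∞, so z diverges linearly to +∞ or −∞. Moreover, if sin θ⁺ < 0 (i.e., z(s) → −∞), then y(s) → −λ/μ as s → +∞. The analogous statements hold as s → −∞. -/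
open Real Filter Topology Set

/-- If `g` has derivative `g'` everywhere and `g' → L` at `+∞`, then `g s / s → L`. -/
lemma slope_tendsto_of_deriv_tendsto (g g' : ℝ → ℝ)
    (hg : ∀ s, HasDerivAt g (g' s) s) (L : ℝ)
    (h : Tendsto g' atTop (𝓝 L)) :
    Tendsto (fun s => g s / s) atTop (𝓝 L) := by
  rw [Metric.tendsto_atTop] at h ⊢
  intro ε hε
  obtain ⟨S₀, hS₀⟩ := h (ε / 2) (by linarith)
  set S := max S₀ 1 with hSdef
  have hS : ∀ n ≥ S, dist (g' n) L < ε / 2 := fun n hn => hS₀ n (le_trans (le_max_left _ _) hn)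
  have hSpos : (0:ℝ) < S := lt_of_lt_of_le one_pos (le_max_right _ _)
  set C := |g S - L * S| with hC
  refine ⟨max S (2 * C / ε + 1), fun s hs => ?_⟩
  have hsS : S ≤ s := le_trans (le_max_left _ _) hs
  have hs1 : 2 * C / ε + 1 ≤ s := le_trans (le_max_right _ _) hs
  have hC0 : 0 ≤ C := abs_nonneg _
  have hspos : 0 < s := lt_of_lt_of_le hSpos hsS
  have key : |(g s - L * s) - (g S - L * S)| ≤ (ε / 2) * (s - S) := by
    have := Convex.norm_image_sub_le_of_norm_hasDerivWithin_le
      (f := fun t => g t - L * t) (f' := fun t => g' t - L) (s := Icc S s) (C := ε / 2)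
      (fun x _ => by
        have : HasDerivAt (fun t => g t - L * t) (g' x - L) x := by
          exact ((hg x).sub ((hasDerivAt_id x).const_mul L)).congr_deriv (by ring)
        exact this.hasDerivWithinAt)
      (fun x hx => by
        have := hS x hx.1
        rw [Real.dist_eq] at this
        simpa [Real.norm_eq_abs] using this.le)
      (convex_Icc S s) (left_mem_Icc.2 hsS) (right_mem_Icc.2 hsS)
    rw [Real.norm_eq_abs, Real.norm_eq_abs, abs_of_nonneg (by linarith : (0:ℝ) ≤ s - S)] at this
    exact this
  rw [Real.dist_eq]
  have h1 : |g s - L * s| ≤ C + (ε / 2) * (s - S) := by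
    have := abs_sub_abs_le_abs_sub (g s - L * s) (g S - L * S)
    linarith [key]
  have h2 : g s / s - L = (g s - L * s) / s := by field_simp
  rw [h2, abs_div, abs_of_pos hspos, div_lt_iff₀ hspos]
  have hCs : C < ε / 2 * s := by
    have heq : ε / 2 * (2 * C / ε + 1) = C + ε / 2 := by field_simp
    nlinarith [mul_le_mul_of_nonneg_left hs1 (by linarith : (0:ℝ) ≤ ε / 2)]
  nlinarith [mul_pos (by linarith : (0:ℝ) < ε/2) hSpos]

/-- Core lemma: scalar autonomous ODE with positive initial velocity and an
equilibrium above the initial point converges to an equilibrium. -/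
lemma ode_tendsto_pos (f : ℝ → ℝ) (hf : ContDiff ℝ 1 f)
    (θ : ℝ → ℝ) (hθ : ∀ s, HasDerivAt θ (f (θ s)) s)
    (h0 : 0 < f (θ 0))
    (ha : ∃ a > θ 0, f a = 0) :
    ∃ p, Tendsto θ atTop (𝓝 p) ∧ f p = 0 := by
  have hfc : Continuous f := hf.continuous
  have hθc : Continuous θ := continuous_iff_continuousAt.2 fun s => (hθ s).continuousAt
  obtain ⟨a, haθ, hfa⟩ := ha
  set Z : Set ℝ := Ici (θ 0) ∩ f ⁻¹' {0} with hZ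
  have hZc : IsClosed Z := isClosed_Ici.inter (isClosed_singleton.preimage hfc)
  have hZne : Z.Nonempty := ⟨a, le_of_lt haθ, hfa⟩
  have hZbd : BddBelow Z := ⟨θ 0, fun x hx => hx.1⟩
  set a0 := sInf Z with ha0def
  have ha0 : a0 ∈ Z := hZc.csInf_mem hZne hZbd
  have hfa0 : f a0 = 0 := ha0.2
  have ha0gt : θ 0 < a0 := lt_of_le_of_ne ha0.1
    (by intro h; rw [← h] at hfa0; exact h0.ne' hfa0)
  have hpos : ∀ x ∈ Ico (θ 0) a0, 0 < f x := by
    intro x hx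
    rcases lt_trichotomy (f x) 0 with h | h | h
    · exfalso
      obtain ⟨c, hc, hfc0⟩ := intermediate_value_Icc' hx.1 hfc.continuousOn
        (show (0:ℝ) ∈ Icc (f x) (f (θ 0)) from ⟨h.le, h0.le⟩)
      exact absurd (csInf_le hZbd ⟨hc.1, hfc0⟩) (not_le.2 (lt_of_le_of_lt hc.2 hx.2))
    · exact absurd (csInf_le hZbd ⟨hx.1, h⟩) (not_le.2 hx.2)
    · exact h
  have hbelow : ∀ s, 0 ≤ s → θ s < a0 := by
    intro s₂ hs₂
    by_contra hcon
    push_neg at hcon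
    set E : Set ℝ := Icc 0 s₂ ∩ θ ⁻¹' {a0} with hE
    have hEc : IsClosed E := isClosed_Icc.inter (isClosed_singleton.preimage hθc)
    have hEne : E.Nonempty := by
      obtain ⟨c, hc, hc0⟩ := intermediate_value_Icc hs₂ hθc.continuousOn
        (show a0 ∈ Icc (θ 0) (θ s₂) from ⟨ha0gt.le, hcon⟩)
      exact ⟨c, hc, hc0⟩
    have hEbd : BddBelow E := ⟨0, fun x hx => hx.1.1⟩
    set s₁ := sInf E with hs₁def
    have hs₁ : s₁ ∈ E := hEc.csInf_mem hEne hEbd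
    have hθs₁ : θ s₁ = a0 := hs₁.2
    have hs₁pos : 0 < s₁ := lt_of_le_of_ne hs₁.1.1
      (by intro h; rw [← h] at hθs₁; exact ha0gt.ne hθs₁)
    have hbefore : ∀ s ∈ Ico 0 s₁, θ s ≠ a0 := by
      intro s hs hcontra
      exact absurd (csInf_le hEbd ⟨⟨hs.1, le_trans hs.2.le hs₁.1.2⟩, hcontra⟩)
        (not_le.2 hs.2)
    obtain ⟨K, t, htmem, hlip⟩ := (hf.contDiffAt (x := a0)).exists_lipschitzOnWith
    have hpre : θ ⁻¹' t ∈ 𝓝 s₁ := hθc.continuousAt.preimage_mem_nhds (hθs₁ ▸ htmem)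
    obtain ⟨ε, hεpos, hball⟩ := Metric.mem_nhds_iff.1 hpre
    set δ := min (ε / 2) (s₁ / 2) with hδdef
    have hδpos : 0 < δ := lt_min (by linarith) (by linarith)
    have hδs₁ : s₁ - δ ∈ Ico 0 s₁ :=
      ⟨by have := min_le_right (ε/2) (s₁/2); simp only [hδdef]; linarith,
       by linarith⟩
    have hsub : Icc (s₁ - δ) s₁ ⊆ θ ⁻¹' t := by
      intro u hu
      apply hball
      rw [Metric.mem_ball, Real.dist_eq, abs_lt]
      have := min_le_left (ε/2) (s₁/2)
      constructor <;> [skip; skip] <;>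
        (first | (have h1 := hu.1; have h2 := hu.2; simp only [hδdef] at *; linarith))
    have huniq := ODE_solution_unique_of_mem_Icc_left
      (v := fun _ => f) (s := fun _ => t) (K := K)
      (fun _ _ => hlip)
      (f := θ) (g := fun _ => a0) (a := s₁ - δ) (b := s₁)
      (hθc.continuousOn)
      (fun u _ => (hθ u).hasDerivWithinAt)
      (fun u hu => hsub ⟨hu.1.le, hu.2⟩)
      (continuousOn_const)
      (fun u _ => by
        simpa [hfa0] using (hasDerivWithinAt_const u (Iic u) a0))
      (fun _ _ => mem_of_mem_nhds htmem)
      (hθs₁)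
    have := huniq ⟨le_refl _, by linarith⟩
    exact hbefore _ hδs₁ this
  have habove : ∀ s, 0 ≤ s → θ 0 ≤ θ s := by
    intro s₂ hs₂
    by_contra hcon
    push_neg at hcon
    have hs₂pos : 0 < s₂ := by
      rcases hs₂.lt_or_eq with h | h
      · exact h
      · exfalso; rw [← h] at hcon; exact lt_irrefl _ hcon
    set E : Set ℝ := Icc 0 s₂ ∩ θ ⁻¹' {θ 0} with hE
    have hEc : IsClosed E := isClosed_Icc.inter (isClosed_singleton.preimage hθc)
    have hEne : E.Nonempty := ⟨0, ⟨le_refl _, hs₂⟩, rfl⟩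
    have hEbd : BddAbove E := ⟨s₂, fun x hx => hx.1.2⟩
    set s₁ := sSup E with hs₁def
    have hs₁ : s₁ ∈ E := hEc.csSup_mem hEne hEbd
    have hθs₁ : θ s₁ = θ 0 := hs₁.2
    have hs₁lt : s₁ < s₂ := lt_of_le_of_ne hs₁.1.2
      (by intro h; rw [h] at hθs₁; exact hcon.ne hθs₁)
    have hafter : ∀ s ∈ Ioc s₁ s₂, θ s < θ 0 := by
      intro s hs
      have hne : ∀ u ∈ Icc s s₂, θ u ≠ θ 0 := by
        intro u hu hcontra
        have : u ∈ E := ⟨⟨(hs₁.1.1.trans hs.1.le).trans hu.1, hu.2⟩, hcontra⟩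
        exact absurd (le_csSup hEbd this) (not_le.2 (lt_of_lt_of_le hs.1 hu.1))
      by_contra hge
      push_neg at hge
      have hgt : θ 0 < θ s := lt_of_le_of_ne hge (fun h => hne s ⟨le_refl _, hs.2⟩ h.symm)
      obtain ⟨c, hc, hc0⟩ := intermediate_value_Icc' hs.2 hθc.continuousOn
        (show θ 0 ∈ Icc (θ s₂) (θ s) from ⟨hcon.le, hgt.le⟩)
      exact hne c hc hc0
    have hd : HasDerivAt θ (f (θ 0)) s₁ := hθs₁ ▸ hθ s₁
    have hslope := hasDerivAt_iff_tendsto_slope.1 hd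
    have hslope' : Tendsto (slope θ s₁) (𝓝[>] s₁) (𝓝 (f (θ 0))) :=
      hslope.mono_left (nhdsWithin_mono _ (fun x hx => ne_of_gt hx))
    have hev : ∀ᶠ u in 𝓝[>] s₁, 0 < slope θ s₁ u :=
      hslope'.eventually (eventually_gt_nhds h0)
    have hev2 : ∀ᶠ u in 𝓝[>] s₁, u ∈ Ioc s₁ s₂ :=
      eventually_nhdsWithin_of_eventually_nhds (eventually_le_nhds hs₁lt) |>.and
        self_mem_nhdsWithin |>.mono (fun u hu => ⟨hu.2, hu.1⟩)
    obtain ⟨u, hu1, hu2⟩ := (hev.and hev2).exists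
    have : θ 0 < θ u := by
      have := hu1
      rw [slope_def_field] at this
      have hus : s₁ < u := hu2.1
      have := mul_pos this (sub_pos.2 hus)
      rw [div_mul_cancel₀] at this
      · rw [hθs₁] at this; linarith
      · exact ne_of_gt (sub_pos.2 hus)
    exact absurd (hafter u hu2) (not_lt.2 this.le)
  have hmono : MonotoneOn θ (Ici 0) := by
    apply monotoneOn_of_deriv_nonneg (convex_Ici 0) hθc.continuousOn
      (fun x _ => (hθ x).differentiableAt.differentiableWithinAt)
    intro x hx
    rw [interior_Ici] at hx
    rw [(hθ x).deriv]
    exact (hpos _ ⟨habove x hx.le, hbelow x hx.le⟩).le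
  set φ : ℝ → ℝ := fun s => θ (max s 0) with hφ
  have hφmono : Monotone φ := fun u v huv =>
    hmono (Set.mem_Ici.2 (le_max_right _ _)) (Set.mem_Ici.2 (le_max_right _ _)) (max_le_max huv (le_refl 0))
  have hφbdd : BddAbove (range φ) := ⟨a0, by
    rintro _ ⟨s, rfl⟩; exact (hbelow _ (le_max_right _ _)).le⟩
  have hφt := tendsto_atTop_ciSup hφmono hφbdd
  set p := ⨆ s, φ s with hp
  have hθt : Tendsto θ atTop (𝓝 p) := by
    refine hφt.congr' ?_
    filter_upwards [eventually_ge_atTop (0:ℝ)] with s hs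
    simp [hφ, max_eq_left hs]
  refine ⟨p, hθt, ?_⟩
  have h1 : Tendsto (fun s => θ s / s) atTop (𝓝 0) := by
    have := hθt.mul tendsto_inv_atTop_zero
    simpa [div_eq_mul_inv] using this
  have h2 : Tendsto (fun s => θ s / s) atTop (𝓝 (f p)) :=
    slope_tendsto_of_deriv_tendsto θ (fun s => f (θ s)) hθ (f p)
      ((hfc.tendsto p).comp hθt)
  exact tendsto_nhds_unique h2 h1

lemma ode_tendsto (f : ℝ → ℝ) (hf : ContDiff ℝ 1 f)
    (θ : ℝ → ℝ) (hθ : ∀ s, HasDerivAt θ (f (θ s)) s)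
    (h0 : f (θ 0) ≠ 0)
    (hup : ∃ a > θ 0, f a = 0) (hdown : ∃ b < θ 0, f b = 0) :
    ∃ p, Tendsto θ atTop (𝓝 p) ∧ f p = 0 := by
  rcases h0.lt_or_gt with hneg | hpos
  · set g : ℝ → ℝ := fun x => -f (-x) with hg
    have hgc : ContDiff ℝ 1 g := (hf.comp (contDiff_id.neg)).neg
    have hθ' : ∀ s, HasDerivAt (fun s => -θ s) (g (-θ s)) s := by
      intro s
      have := (hθ s).neg
      exact this.congr_deriv (by simp [hg])
    obtain ⟨b, hbθ, hfb⟩ := hdown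
    obtain ⟨p, hp, hgp⟩ := ode_tendsto_pos g hgc (fun s => -θ s) hθ'
      (by simpa [hg] using hneg)
      ⟨-b, by simpa using hbθ, by simpa [hg] using hfb⟩
    refine ⟨-p, ?_, ?_⟩
    · have := hp.neg
      simpa using this
    · simpa [hg] using hgp
  · exact ode_tendsto_pos f hf θ hθ hpos hup

lemma ode_tendsto_bot (f : ℝ → ℝ) (hf : ContDiff ℝ 1 f)
    (θ : ℝ → ℝ) (hθ : ∀ s, HasDerivAt θ (f (θ s)) s)
    (h0 : f (θ 0) ≠ 0)
    (hup : ∃ a > θ 0, f a = 0) (hdown : ∃ b < θ 0, f b = 0) :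
    ∃ p, Tendsto θ atBot (𝓝 p) ∧ f p = 0 := by
  set ψ : ℝ → ℝ := fun s => θ (-s) with hψ
  have hψd : ∀ s, HasDerivAt ψ (-f (ψ s)) s := by
    intro s
    have := (hθ (-s)).comp s ((hasDerivAt_id s).neg)
    simpa [hψ, mul_comm, Function.comp_def] using this
  have hψ0 : ψ 0 = θ 0 := by simp [hψ]
  obtain ⟨p, hp, hfp⟩ := ode_tendsto (fun x => -f x) hf.neg ψ hψd
    (by simp [hψ0]; exact fun h => h0 h)
    (by obtain ⟨a, h1, h2⟩ := hup; exact ⟨a, by rwa [hψ0], by simp [h2]⟩)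
    (by obtain ⟨b, h1, h2⟩ := hdown; exact ⟨b, by rwa [hψ0], by simp [h2]⟩)
  refine ⟨p, ?_, by simpa using hfp⟩
  have := hp.comp tendsto_neg_atBot_atTop
  refine this.congr fun s => by simp [hψ]

lemma Fzero_above (μ c M : ℝ) :
    ∃ a > M, μ * Real.cos a - (a - c) * Real.sin a = 0 := by
  set F : ℝ → ℝ := fun x => μ * Real.cos x - (x - c) * Real.sin x with hF
  have hFc : Continuous F := by fun_prop
  obtain ⟨n, hn⟩ := exists_nat_gt (max M c)
  have h2π : (1:ℝ) ≤ 2 * π := by nlinarith [Real.pi_gt_three]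
  have hn2 : (n:ℝ) ≤ n * (2 * π) := by
    nlinarith [Nat.cast_nonneg (α := ℝ) n]
  set x₁ : ℝ := π / 2 + n * (2 * π) with hx₁
  set x₂ : ℝ := -(π / 2) + (n + 1 : ℕ) * (2 * π) with hx₂
  have hπ : (0:ℝ) < π := Real.pi_pos
  have hx₁gt : max M c < x₁ := by
    have : (n:ℝ) ≤ x₁ := by rw [hx₁]; linarith
    linarith [hn]
  have hx12 : x₁ < x₂ := by
    rw [hx₁, hx₂, Nat.cast_add, Nat.cast_one]
    ring_nf
    nlinarith
  have hs₁ : Real.sin x₁ = 1 := by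
    rw [hx₁, Real.sin_add_nat_mul_two_pi, Real.sin_pi_div_two]
  have hc₁ : Real.cos x₁ = 0 := by
    rw [hx₁, Real.cos_add_nat_mul_two_pi, Real.cos_pi_div_two]
  have hs₂ : Real.sin x₂ = -1 := by
    rw [hx₂, Real.sin_add_nat_mul_two_pi, Real.sin_neg, Real.sin_pi_div_two]
  have hc₂ : Real.cos x₂ = 0 := by
    rw [hx₂, Real.cos_add_nat_mul_two_pi, Real.cos_neg, Real.cos_pi_div_two]
  have hF₁ : F x₁ < 0 := by
    rw [hF]; simp only [hs₁, hc₁]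
    have : c < x₁ := lt_of_le_of_lt (le_max_right M c) hx₁gt
    nlinarith
  have hF₂ : 0 < F x₂ := by
    rw [hF]; simp only [hs₂, hc₂]
    have : c < x₂ := lt_trans (lt_of_le_of_lt (le_max_right M c) hx₁gt) hx12
    nlinarith
  obtain ⟨a, ha, hFa⟩ := intermediate_value_Icc hx12.le hFc.continuousOn
    (show (0:ℝ) ∈ Icc (F x₁) (F x₂) from ⟨hF₁.le, hF₂.le⟩)
  exact ⟨a, lt_of_lt_of_le (lt_of_le_of_lt (le_max_left M c) hx₁gt) ha.1, hFa⟩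

lemma Fzero_below (μ c M : ℝ) :
    ∃ b < M, μ * Real.cos b - (b - c) * Real.sin b = 0 := by
  obtain ⟨a, ha, hFa⟩ := Fzero_above μ (-c) (-M)
  refine ⟨-a, by linarith, ?_⟩
  rw [Real.cos_neg, Real.sin_neg]
  linarith [hFa]

theorem stmt17
    (lam μ θ₀ : ℝ) (y z θ : ℝ → ℝ)
    (hy0 : y 0 = 0) (hz0 : z 0 = 0) (hθ0 : θ 0 = θ₀)
    (hy : ∀ s : ℝ, HasDerivAt y (Real.exp (z s) * Real.cos (θ s)) s)
    (hz : ∀ s : ℝ, HasDerivAt z (Real.sin (θ s)) s)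
    (hθ : ∀ s : ℝ, HasDerivAt θ
      (-lam * Real.exp (-z s) * Real.sin (θ s) +
        μ * (Real.cos (θ s) - y s * Real.exp (-z s) * Real.sin (θ s))) s)
    (hμ : μ ≠ 0)
    (hne : μ * Real.cos θ₀ - (θ₀ - θ₀ + lam) * Real.sin θ₀ ≠ 0) :
    (∃ θp : ℝ, Tendsto θ atTop (𝓝 θp) ∧ Real.sin θp ≠ 0 ∧
      Tendsto (fun s => z s / s) atTop (𝓝 (Real.sin θp)) ∧
      (Real.sin θp < 0 → Tendsto y atTop (𝓝 (-lam / μ)))) ∧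
    (∃ θm : ℝ, Tendsto θ atBot (𝓝 θm) ∧ Real.sin θm ≠ 0 ∧
      Tendsto (fun s => z s / s) atBot (𝓝 (Real.sin θm)) ∧
      (0 < Real.sin θm → Tendsto y atBot (𝓝 (-lam / μ)))) := by
  -- The vector field of the reduced scalar equation
  set F : ℝ → ℝ := fun x => μ * Real.cos x - (x - θ₀ + lam) * Real.sin x with hF
  have hFcd : ContDiff ℝ 1 F :=
    (contDiff_const.mul Real.contDiff_cos).sub
      (((contDiff_id.sub contDiff_const).add contDiff_const).mul Real.contDiff_sin)
  -- first integral : (lam + μ y) e^{-z} = θ - θ₀ + lam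
  set E : ℝ → ℝ := fun s => θ s - (lam + μ * y s) * Real.exp (-z s) with hEdef
  have hE : ∀ s, HasDerivAt E 0 s := by
    intro s
    have h1 : HasDerivAt (fun s => lam + μ * y s)
        (μ * (Real.exp (z s) * Real.cos (θ s))) s := ((hy s).const_mul μ).const_add lam
    have hExp : HasDerivAt (fun s => Real.exp (-z s))
        (Real.exp (-z s) * (-Real.sin (θ s))) s := by
      have := ((hz s).neg).exp
      simpa using this
    have h3 := (hθ s).sub (h1.mul hExp)
    refine h3.congr_deriv ?_
    have hprod : Real.exp (z s) * Real.exp (-z s) = 1 := by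
      rw [← Real.exp_add]; simp
    linear_combination (-μ * Real.cos (θ s)) * hprod
  have hInt : ∀ s, (lam + μ * y s) * Real.exp (-z s) = θ s - θ₀ + lam := by
    intro s
    have hdiff : Differentiable ℝ E := fun u => (hE u).differentiableAt
    have hconst := is_const_of_deriv_eq_zero hdiff (fun u => (hE u).deriv) s 0
    have hE0 : E 0 = θ₀ - lam := by
      simp [hEdef, hy0, hz0, hθ0]
    rw [hE0] at hconst
    simp only [hEdef] at hconst
    linarith
  -- the reduced scalar ODE
  have hθF : ∀ s, HasDerivAt θ (F (θ s)) s := by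
    intro s
    have h := hInt s
    convert hθ s using 1
    simp only [hF]
    linear_combination (Real.sin (θ s)) * h
  have hF0 : F (θ 0) ≠ 0 := by rw [hθ0]; exact hne
  have hup : ∃ a > θ 0, F a = 0 := by
    obtain ⟨a, ha, hFa⟩ := Fzero_above μ (θ₀ - lam) (θ 0)
    exact ⟨a, ha, by simp only [hF]; linear_combination hFa⟩
  have hdown : ∃ b < θ 0, F b = 0 := by
    obtain ⟨b, hb, hFb⟩ := Fzero_below μ (θ₀ - lam) (θ 0)
    exact ⟨b, hb, by simp only [hF]; linear_combination hFb⟩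
  -- equilibria have nonvanishing sine
  have hsin_ne : ∀ q, F q = 0 → Real.sin q ≠ 0 := by
    intro q hq hsin
    have h1 : μ * Real.cos q = 0 := by
      simp only [hF, hsin, mul_zero, sub_zero] at hq
      exact hq
    have h2 : Real.cos q = 0 := by
      rcases mul_eq_zero.1 h1 with h | h
      · exact absurd h hμ
      · exact h
    nlinarith [Real.sin_sq_add_cos_sq q]
  -- formula for y
  have hyeq : ∀ s, y s = ((θ s - θ₀ + lam) * Real.exp (z s) - lam) / μ := by
    intro s
    have h := hInt s
    have hprod : Real.exp (z s) * Real.exp (-z s) = 1 := by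
      rw [← Real.exp_add]; simp
    rw [eq_div_iff hμ]
    linear_combination Real.exp (z s) * h - (lam + μ * y s) * hprod
  constructor
  · -- atTop
    obtain ⟨θp, hθtop, hFp⟩ := ode_tendsto F hFcd θ hθF hF0 hup hdown
    have hsinp := hsin_ne θp hFp
    have hzs : Tendsto (fun s => z s / s) atTop (𝓝 (Real.sin θp)) :=
      slope_tendsto_of_deriv_tendsto z (fun s => Real.sin (θ s)) hz (Real.sin θp)
        ((Real.continuous_sin.tendsto θp).comp hθtop)
    refine ⟨θp, hθtop, hsinp, hzs, ?_⟩
    intro hL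
    set L := Real.sin θp with hLs
    -- z → -∞
    have hzbot : Tendsto z atTop atBot := by
      have hev : z ≤ᶠ[atTop] fun s => L / 2 * s := by
        filter_upwards [hzs.eventually (eventually_lt_nhds (by linarith : L < L / 2)),
          eventually_gt_atTop (0:ℝ)] with s hlt hs
        have : z s = (z s / s) * s := (div_mul_cancel₀ _ hs.ne').symm
        nlinarith [mul_lt_mul_of_pos_right hlt hs]
      exact tendsto_atBot_mono' atTop hev
        ((tendsto_const_mul_atBot_of_neg (by linarith : L / 2 < 0)).2 tendsto_id)
    have hexp : Tendsto (fun s => Real.exp (z s)) atTop (𝓝 0) :=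
      Real.tendsto_exp_atBot.comp hzbot
    have h1 : Tendsto (fun s => ((θ s - θ₀ + lam) * Real.exp (z s) - lam) / μ) atTop
        (𝓝 (((θp - θ₀ + lam) * 0 - lam) / μ)) :=
      ((((hθtop.sub_const θ₀).add_const lam).mul hexp).sub_const lam).div_const μ
    have h2 : Tendsto y atTop (𝓝 (((θp - θ₀ + lam) * 0 - lam) / μ)) :=
      h1.congr (fun s => (hyeq s).symm)
    convert h2 using 2
    ring
  · -- atBot
    obtain ⟨θm, hθbot, hFm⟩ := ode_tendsto_bot F hFcd θ hθF hF0 hup hdown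
    have hsinm := hsin_ne θm hFm
    -- z s / s at -∞ via time reversal
    set w : ℝ → ℝ := fun s => z (-s) with hw
    have hwd : ∀ s, HasDerivAt w (-Real.sin (θ (-s))) s := by
      intro s
      have := (hz (-s)).comp s ((hasDerivAt_id s).neg)
      simpa [hw, mul_comm, Function.comp_def] using this
    have htm : Tendsto (fun s => θ (-s)) atTop (𝓝 θm) :=
      hθbot.comp tendsto_neg_atTop_atBot
    have hws : Tendsto (fun s => w s / s) atTop (𝓝 (-Real.sin θm)) :=
      slope_tendsto_of_deriv_tendsto w (fun s => -Real.sin (θ (-s))) hwd _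
        (((Real.continuous_sin.tendsto θm).comp htm).neg)
    have hzs : Tendsto (fun s => z s / s) atBot (𝓝 (Real.sin θm)) := by
      have := (hws.comp tendsto_neg_atBot_atTop).neg
      rw [neg_neg] at this
      refine this.congr fun s => ?_
      simp only [Function.comp, hw, neg_neg]
      rw [div_neg, neg_neg]
    refine ⟨θm, hθbot, hsinm, hzs, ?_⟩
    intro hL
    set L := Real.sin θm with hLs
    have hzbot : Tendsto z atBot atBot := by
      have hev : z ≤ᶠ[atBot] fun s => L / 2 * s := by
        filter_upwards [hzs.eventually (eventually_gt_nhds (by linarith : L / 2 < L)),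
          eventually_lt_atBot (0:ℝ)] with s hlt hs
        have : z s = (z s / s) * s := (div_mul_cancel₀ _ hs.ne).symm
        nlinarith [mul_lt_mul_of_neg_right hlt hs]
      exact tendsto_atBot_mono' atBot hev
        ((tendsto_const_mul_atBot_of_pos (by linarith : 0 < L / 2)).2 tendsto_id)
    have hexp : Tendsto (fun s => Real.exp (z s)) atBot (𝓝 0) :=
      Real.tendsto_exp_atBot.comp hzbot
    have h1 : Tendsto (fun s => ((θ s - θ₀ + lam) * Real.exp (z s) - lam) / μ) atBot
        (𝓝 (((θm - θ₀ + lam) * 0 - lam) / μ)) :=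
      ((((hθbot.sub_const θ₀).add_const lam).mul hexp).sub_const lam).div_const μ
    have h2 : Tendsto y atBot (𝓝 (((θm - θ₀ + lam) * 0 - lam) / μ)) :=
      h1.congr (fun s => (hyeq s).symm)
    convert h2 using 2
    ring
end

section
/- Fix real numbers b ≠ 0, λ, and θ₀ with sin θ₀ ≠ 0, and let k be the integer with kπ < θ₀ < (k+1)π. Consider the system y'(s) = e^{z(s)} cos θ(s), z'(s) = sin θ(s), θ'(s) = [sin θ(s) / (e^{4z(s)} + b²)]·(b²(2 sin θ(s) cos θ(s) − λ e^{−z(s)} sin² θ(s)) − λ e^{3z(s)}), with y(0) = z(0) = 0, θ(0) = θ₀. Then: (i) any solution defined on an interval containing 0 satisfies kπ < θ(s) < (k+1)π for all s in that interval; (ii) there is a solution (y, z, θ) defined on all of ℝ; (iii) for any global solution, sin θ(s) ≠ 0 for all s, so z is strictly monotone on ℝ; and (iv) if λ ≠ 0, the set { s ∈ ℝ : cos θ(s) = 0 } contains at most one element, so y has at most one critical point. -/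
open Real Filter Topology

section
open Set Metric NNReal

namespace Stmt18Helper

lemma eventually_pos_right {h : ℝ → ℝ} {d s : ℝ} (hd : HasDerivAt h d s) (h0 : h s = 0)
    (hpos : 0 < d) : ∀ᶠ t in 𝓝[>] s, 0 < h t := by
  have hs := hasDerivAt_iff_tendsto_slope.mp hd
  have h1 : ∀ᶠ t in 𝓝[≠] s, 0 < slope h s t := hs.eventually (eventually_gt_nhds hpos)
  have h2 : ∀ᶠ t in 𝓝[>] s, 0 < slope h s t :=
    h1.filter_mono (nhdsWithin_mono _ (fun x hx => ne_of_gt hx))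
  filter_upwards [h2, self_mem_nhdsWithin] with t ht hts
  have hne : t - s ≠ 0 := sub_ne_zero.mpr (ne_of_gt hts)
  have hmul := mul_pos ht (sub_pos.mpr hts)
  rwa [slope_def_field, h0, sub_zero, div_mul_cancel₀ _ hne] at hmul

lemma eventually_neg_left {h : ℝ → ℝ} {d s : ℝ} (hd : HasDerivAt h d s) (h0 : h s = 0)
    (hpos : 0 < d) : ∀ᶠ t in 𝓝[<] s, h t < 0 := by
  have hs := hasDerivAt_iff_tendsto_slope.mp hd
  have h1 : ∀ᶠ t in 𝓝[≠] s, 0 < slope h s t := hs.eventually (eventually_gt_nhds hpos)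
  have h2 : ∀ᶠ t in 𝓝[<] s, 0 < slope h s t :=
    h1.filter_mono (nhdsWithin_mono _ (fun x hx => ne_of_lt hx))
  filter_upwards [h2, self_mem_nhdsWithin] with t ht hts
  have hne : t - s ≠ 0 := sub_ne_zero.mpr (ne_of_lt hts)
  have hmul := mul_neg_of_pos_of_neg ht (sub_neg.mpr hts)
  rwa [slope_def_field, h0, sub_zero, div_mul_cancel₀ _ hne] at hmul

lemma no_two_zeros {h H : ℝ → ℝ} (hd : ∀ s, HasDerivAt h (H s) s)
    (hsgn : ∀ s, h s = 0 → 0 < H s) {s₁ s₂ : ℝ} (hlt : s₁ < s₂)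
    (h1 : h s₁ = 0) (h2 : h s₂ = 0) : False := by
  have hcont : Continuous h := by
    rw [continuous_iff_continuousAt]; exact fun s => (hd s).continuousAt
  have hev := eventually_pos_right (hd s₁) h1 (hsgn s₁ h1)
  have hlt2 : ∀ᶠ t in 𝓝[>] s₁, t < s₂ := mem_nhdsWithin_of_mem_nhds (Iio_mem_nhds hlt)
  have hself : ∀ᶠ t in 𝓝[>] s₁, s₁ < t := self_mem_nhdsWithin
  obtain ⟨m, hm1, hm2, hm3⟩ := (hev.and (hlt2.and hself)).exists
  set Z : Set ℝ := {t : ℝ | t ∈ Icc m s₂ ∧ h t = 0} with hZdef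
  have hZc : IsClosed Z := isClosed_Icc.inter (isClosed_eq hcont continuous_const)
  have hs₂Z : s₂ ∈ Z := ⟨⟨hm2.le, le_rfl⟩, h2⟩
  have hbdd : BddBelow Z := BddBelow.mono (fun x hx => hx.1) bddBelow_Icc
  set u := sInf Z with hudef
  have huZ : u ∈ Z := hZc.csInf_mem ⟨s₂, hs₂Z⟩ hbdd
  have hmu : m < u := by
    have hmu' : m ≤ u := le_csInf ⟨s₂, hs₂Z⟩ (fun x hx => hx.1.1)
    rcases hmu'.lt_or_eq with hgood | hbad
    · exact hgood
    · exfalso; have := huZ.2; rw [← hbad] at this; linarith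
  have hposon : ∀ w, m ≤ w → w < u → 0 < h w := by
    intro w hw1 hw2
    by_contra hle; push_neg at hle
    rcases hle.lt_or_eq with hneg | heq
    · obtain ⟨c, hc, hc0⟩ := intermediate_value_Icc' hw1 hcont.continuousOn
        (⟨hneg.le, hm1.le⟩ : (0:ℝ) ∈ Icc (h w) (h m))
      have hcZ : c ∈ Z := ⟨⟨hc.1, le_trans hc.2 (le_trans hw2.le huZ.1.2)⟩, hc0⟩
      have := csInf_le hbdd hcZ
      have := hc.2
      linarith
    · have hwZ : w ∈ Z := ⟨⟨hw1, le_trans hw2.le huZ.1.2⟩, heq⟩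
      have := csInf_le hbdd hwZ; linarith
  have hu0 : h u = 0 := huZ.2
  have hevn := eventually_neg_left (hd u) hu0 (hsgn u hu0)
  have hIm : ∀ᶠ t in 𝓝[<] u, m < t := mem_nhdsWithin_of_mem_nhds (Ioi_mem_nhds hmu)
  have hselfu : ∀ᶠ t in 𝓝[<] u, t < u := self_mem_nhdsWithin
  obtain ⟨t, ht1, ht2, ht3⟩ := (hevn.and (hIm.and hselfu)).exists
  exact absurd (hposon t ht2.le ht3) (by linarith)

lemma zeros_subsingleton {h H : ℝ → ℝ} (hd : ∀ s, HasDerivAt h (H s) s)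
    (hsgn : ∀ s, h s = 0 → 0 < H s) : {s : ℝ | h s = 0}.Subsingleton := by
  intro s₁ hs₁ s₂ hs₂
  by_contra hne
  rcases lt_or_gt_of_ne hne with hlt | hlt
  · exact (no_two_zeros hd hsgn hlt hs₁ hs₂).elim
  · exact (no_two_zeros hd hsgn hlt hs₂ hs₁).elim

lemma sign_persist {f : ℝ → ℝ} (hf : Continuous f) (h0 : ∀ s, f s ≠ 0) {s t : ℝ}
    (hs : 0 < f s) : 0 < f t := by
  by_contra hle; push_neg at hle
  have hlt : f t < 0 := lt_of_le_of_ne hle (h0 t)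
  rcases le_total s t with h | h
  · obtain ⟨c, _, hc⟩ := intermediate_value_Icc' h hf.continuousOn
      (⟨hlt.le, hs.le⟩ : (0:ℝ) ∈ Icc (f t) (f s))
    exact h0 c hc
  · obtain ⟨c, _, hc⟩ := intermediate_value_Icc h hf.continuousOn
      (⟨hlt.le, hs.le⟩ : (0:ℝ) ∈ Icc (f t) (f s))
    exact h0 c hc

noncomputable def Gc (b lam zv θv : ℝ) : ℝ :=
  (b ^ 2 * (2 * Real.sin θv * Real.cos θv - lam * Real.exp (-zv) * Real.sin θv ^ 2)
    - lam * Real.exp (3 * zv)) / (Real.exp (4 * zv) + b ^ 2)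

noncomputable def vf (b lam : ℝ) : ℝ × ℝ → ℝ × ℝ :=
  fun p => (Real.sin p.2, Real.sin p.2 * Gc b lam p.1 p.2)

lemma contDiff_Gc (b lam : ℝ) : ContDiff ℝ 1 fun p : ℝ × ℝ => Gc b lam p.1 p.2 := by
  unfold Gc
  have hsin : ContDiff ℝ 1 fun p : ℝ × ℝ => Real.sin p.2 :=
    (Real.contDiff_sin.of_le le_top).comp contDiff_snd
  have hcos : ContDiff ℝ 1 fun p : ℝ × ℝ => Real.cos p.2 :=
    (Real.contDiff_cos.of_le le_top).comp contDiff_snd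
  have hexp1 : ContDiff ℝ 1 fun p : ℝ × ℝ => Real.exp (-p.1) :=
    (Real.contDiff_exp.of_le le_top).comp contDiff_fst.neg
  have hexp3 : ContDiff ℝ 1 fun p : ℝ × ℝ => Real.exp (3 * p.1) :=
    (Real.contDiff_exp.of_le le_top).comp (contDiff_const.mul contDiff_fst)
  have hexp4 : ContDiff ℝ 1 fun p : ℝ × ℝ => Real.exp (4 * p.1) :=
    (Real.contDiff_exp.of_le le_top).comp (contDiff_const.mul contDiff_fst)
  exact ContDiff.div
    ((contDiff_const.mul ((contDiff_const.mul hsin |>.mul hcos).sub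
      ((contDiff_const.mul hexp1).mul (hsin.pow 2)))).sub (contDiff_const.mul hexp3))
    (hexp4.add contDiff_const)
    (fun p => by positivity)

lemma contDiff_vf (b lam : ℝ) : ContDiff ℝ 1 (vf b lam) := by
  have hsin : ContDiff ℝ 1 fun p : ℝ × ℝ => Real.sin p.2 :=
    (Real.contDiff_sin.of_le le_top).comp contDiff_snd
  exact hsin.prodMk (hsin.mul (contDiff_Gc b lam))

lemma continuous_Gc (b lam : ℝ) : Continuous fun p : ℝ × ℝ => Gc b lam p.1 p.2 :=
  (contDiff_Gc b lam).continuous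

set_option maxHeartbeats 1000000 in
lemma barrier (b lam θ₀ : ℝ) (hθ₀ : Real.sin θ₀ ≠ 0) (k : ℤ)
    (hk₁ : (k : ℝ) * π < θ₀) (hk₂ : θ₀ < ((k : ℝ) + 1) * π)
    (I : Set ℝ) (hI : I.OrdConnected) (h0I : (0:ℝ) ∈ I)
    (z θ : ℝ → ℝ) (hθ0 : θ 0 = θ₀)
    (hz' : ∀ s ∈ I, HasDerivWithinAt z (Real.sin (θ s)) I s)
    (hθ' : ∀ s ∈ I, HasDerivWithinAt θ (Real.sin (θ s) * Gc b lam (z s) (θ s)) I s) :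
    ∀ s ∈ I, Real.sin (θ s) ≠ 0 ∧ (k : ℝ) * π < θ s ∧ θ s < ((k : ℝ) + 1) * π := by
  have hθc : ContinuousOn θ I := fun s hs => (hθ' s hs).continuousWithinAt
  have hzc : ContinuousOn z I := fun s hs => (hz' s hs).continuousWithinAt
  set a : ℝ → ℝ := fun s => Real.cos (θ s) * Gc b lam (z s) (θ s) with hadef
  have hac : ContinuousOn a I := by
    have h1 : ContinuousOn (fun s => (z s, θ s)) I := hzc.prodMk hθc
    have h2 : ContinuousOn (fun s => Gc b lam (z s) (θ s)) I := by
      have := Continuous.comp_continuousOn (g := fun p : ℝ × ℝ => Gc b lam p.1 p.2)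
        (f := fun s => (z s, θ s)) (s := I) (continuous_Gc b lam) h1
      exact this
    exact (Real.continuous_cos.comp_continuousOn hθc).mul h2
  have hg' : ∀ s ∈ I, HasDerivWithinAt (fun t => Real.sin (θ t)) (a s * Real.sin (θ s)) I s := by
    intro s hs
    have h1 := (Real.hasDerivAt_sin (θ s)).comp_hasDerivWithinAt s (hθ' s hs)
    have h2 : a s * Real.sin (θ s)
        = Real.cos (θ s) * (Real.sin (θ s) * Gc b lam (z s) (θ s)) := by
      rw [hadef]; ring
    rw [h2]
    exact h1
  -- Step 1: sin (θ s) never vanishes on I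
  have key : ∀ s ∈ I, Real.sin (θ s) ≠ 0 := by
    intro s₁ hs₁ hzero
    rcases lt_trichotomy s₁ 0 with hneg | hzero0 | hpos
    · -- s₁ < 0 : uniqueness forward on [s₁, 0]
      have hJI : Icc s₁ (0:ℝ) ⊆ I := hI.out hs₁ h0I
      set c : ℝ → ℝ := fun t => max s₁ (min t 0) with hcdef
      have hcmem : ∀ t, c t ∈ Icc s₁ (0:ℝ) := by
        intro t
        exact ⟨le_max_left _ _, max_le hneg.le (min_le_right _ _)⟩
      have hceq : ∀ t ∈ Icc s₁ (0:ℝ), c t = t := by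
        intro t ht
        rw [hcdef]; simp only
        rw [min_eq_left ht.2, max_eq_right ht.1]
      obtain ⟨K, hK⟩ := isCompact_Icc.exists_bound_of_continuousOn (hac.mono hJI)
      have hlip : ∀ t : ℝ, LipschitzOnWith (Real.toNNReal K) (fun x : ℝ => a (c t) * x) univ := by
        intro t
        have h1 : LipschitzWith (Real.nnabs (a (c t))) (fun x : ℝ => a (c t) * x) := by
          apply LipschitzWith.of_dist_le_mul
          intro x y
          rw [Real.dist_eq, Real.dist_eq, ← mul_sub, abs_mul]
          have : |a (c t)| = (Real.nnabs (a (c t)) : ℝ) := by simp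
          rw [this]
        apply LipschitzWith.lipschitzOnWith
        apply h1.weaken
        rw [← NNReal.coe_le_coe]
        have h2 : ((Real.nnabs (a (c t)) : ℝ≥0) : ℝ) = |a (c t)| := by simp
        rw [h2, Real.coe_toNNReal']
        exact le_trans (by simpa using hK (c t) (hcmem t)) (le_max_left _ _)
      have huniq : EqOn (fun t => Real.sin (θ t)) (fun _ => (0:ℝ)) (Icc s₁ 0) := by
        apply ODE_solution_unique_of_mem_Icc_right (v := fun t x => a (c t) * x)
            (s := fun _ => (univ : Set ℝ)) (fun t _ => hlip t)
        · exact Real.continuous_sin.comp_continuousOn (hθc.mono hJI)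
        · intro t ht
          have htJ : t ∈ Icc s₁ (0:ℝ) := ⟨ht.1, ht.2.le⟩
          have htI : t ∈ I := hJI htJ
          have h2 : I ∈ 𝓝[Ici t] t := by
            rw [mem_nhdsWithin]
            exact ⟨Iio 0, isOpen_Iio, ht.2, fun y hy => hJI ⟨le_trans ht.1 hy.2, hy.1.le⟩⟩
          have h3 := (hg' t htI).mono_of_mem_nhdsWithin h2
          show HasDerivWithinAt (fun t => Real.sin (θ t)) (a (c t) * Real.sin (θ t)) (Ici t) t
          rw [hceq t htJ]
          exact h3
        · exact fun _ _ => mem_univ _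
        · exact continuousOn_const
        · intro t ht
          show HasDerivWithinAt (fun _ => (0:ℝ)) (a (c t) * 0) (Ici t) t
          rw [mul_zero]
          exact hasDerivWithinAt_const _ _ _
        · exact fun _ _ => mem_univ _
        · exact hzero
      have h00 := huniq (right_mem_Icc.mpr hneg.le)
      simp only [hθ0] at h00
      exact hθ₀ h00
    · rw [hzero0, hθ0] at hzero; exact hθ₀ hzero
    · -- 0 < s₁ : uniqueness backward on [0, s₁]
      have hJI : Icc (0:ℝ) s₁ ⊆ I := hI.out h0I hs₁
      set c : ℝ → ℝ := fun t => max 0 (min t s₁) with hcdef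
      have hcmem : ∀ t, c t ∈ Icc (0:ℝ) s₁ := by
        intro t
        exact ⟨le_max_left _ _, max_le hpos.le (min_le_right _ _)⟩
      have hceq : ∀ t ∈ Icc (0:ℝ) s₁, c t = t := by
        intro t ht
        rw [hcdef]; simp only
        rw [min_eq_left ht.2, max_eq_right ht.1]
      obtain ⟨K, hK⟩ := isCompact_Icc.exists_bound_of_continuousOn (hac.mono hJI)
      have hlip : ∀ t : ℝ, LipschitzOnWith (Real.toNNReal K) (fun x : ℝ => a (c t) * x) univ := by
        intro t
        have h1 : LipschitzWith (Real.nnabs (a (c t))) (fun x : ℝ => a (c t) * x) := by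
          apply LipschitzWith.of_dist_le_mul
          intro x y
          rw [Real.dist_eq, Real.dist_eq, ← mul_sub, abs_mul]
          have : |a (c t)| = (Real.nnabs (a (c t)) : ℝ) := by simp
          rw [this]
        apply LipschitzWith.lipschitzOnWith
        apply h1.weaken
        rw [← NNReal.coe_le_coe]
        have h2 : ((Real.nnabs (a (c t)) : ℝ≥0) : ℝ) = |a (c t)| := by simp
        rw [h2, Real.coe_toNNReal']
        exact le_trans (by simpa using hK (c t) (hcmem t)) (le_max_left _ _)
      have huniq : EqOn (fun t => Real.sin (θ t)) (fun _ => (0:ℝ)) (Icc 0 s₁) := by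
        apply ODE_solution_unique_of_mem_Icc_left (v := fun t x => a (c t) * x)
            (s := fun _ => (univ : Set ℝ)) (fun t _ => hlip t)
        · exact Real.continuous_sin.comp_continuousOn (hθc.mono hJI)
        · intro t ht
          have htJ : t ∈ Icc (0:ℝ) s₁ := ⟨ht.1.le, ht.2⟩
          have htI : t ∈ I := hJI htJ
          have h2 : I ∈ 𝓝[Iic t] t := by
            rw [mem_nhdsWithin]
            exact ⟨Ioi 0, isOpen_Ioi, ht.1, fun y hy => hJI ⟨hy.1.le, le_trans hy.2 ht.2⟩⟩
          have h3 := (hg' t htI).mono_of_mem_nhdsWithin h2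
          show HasDerivWithinAt (fun t => Real.sin (θ t)) (a (c t) * Real.sin (θ t)) (Iic t) t
          rw [hceq t htJ]
          exact h3
        · exact fun _ _ => mem_univ _
        · exact continuousOn_const
        · intro t ht
          show HasDerivWithinAt (fun _ => (0:ℝ)) (a (c t) * 0) (Iic t) t
          rw [mul_zero]
          exact hasDerivWithinAt_const _ _ _
        · exact fun _ _ => mem_univ _
        · exact hzero
      have h00 := huniq (left_mem_Icc.mpr hpos.le)
      simp only [hθ0] at h00
      exact hθ₀ h00
  -- Step 2: range
  intro s hs
  refine ⟨key s hs, ?_, ?_⟩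
  · by_contra hle; push_neg at hle
    have hex : ∃ cc ∈ I, θ cc = (k:ℝ) * π := by
      rcases le_total 0 s with h0s | hs0
      · have hJI : Icc (0:ℝ) s ⊆ I := hI.out h0I hs
        obtain ⟨cc, hcc, hcceq⟩ := intermediate_value_Icc' h0s (hθc.mono hJI)
          (⟨hle, by rw [hθ0]; exact hk₁.le⟩ : (k:ℝ) * π ∈ Icc (θ s) (θ 0))
        exact ⟨cc, hJI hcc, hcceq⟩
      · have hJI : Icc s (0:ℝ) ⊆ I := hI.out hs h0I
        obtain ⟨cc, hcc, hcceq⟩ := intermediate_value_Icc hs0 (hθc.mono hJI)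
          (⟨hle, by rw [hθ0]; exact hk₁.le⟩ : (k:ℝ) * π ∈ Icc (θ s) (θ 0))
        exact ⟨cc, hJI hcc, hcceq⟩
    obtain ⟨cc, hccI, hcceq⟩ := hex
    have := key cc hccI
    rw [hcceq] at this
    exact this (Real.sin_int_mul_pi k)
  · by_contra hle; push_neg at hle
    have hex : ∃ cc ∈ I, θ cc = ((k:ℝ) + 1) * π := by
      rcases le_total 0 s with h0s | hs0
      · have hJI : Icc (0:ℝ) s ⊆ I := hI.out h0I hs
        obtain ⟨cc, hcc, hcceq⟩ := intermediate_value_Icc h0s (hθc.mono hJI)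
          (⟨by rw [hθ0]; exact hk₂.le, hle⟩ : ((k:ℝ) + 1) * π ∈ Icc (θ 0) (θ s))
        exact ⟨cc, hJI hcc, hcceq⟩
      · have hJI : Icc s (0:ℝ) ⊆ I := hI.out hs h0I
        obtain ⟨cc, hcc, hcceq⟩ := intermediate_value_Icc' hs0 (hθc.mono hJI)
          (⟨by rw [hθ0]; exact hk₂.le, hle⟩ : ((k:ℝ) + 1) * π ∈ Icc (θ 0) (θ s))
        exact ⟨cc, hJI hcc, hcceq⟩
    obtain ⟨cc, hccI, hcceq⟩ := hex
    have hnz := key cc hccI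
    rw [hcceq] at hnz
    have hcast : ((k:ℝ) + 1) * π = ((k + 1 : ℤ) : ℝ) * π := by push_cast; ring
    rw [hcast] at hnz
    exact hnz (Real.sin_int_mul_pi (k+1))

def Sol (b lam θ₀ : ℝ) (T : ℝ) (x : ℝ → ℝ × ℝ) : Prop :=
  x 0 = (0, θ₀) ∧ ∀ t ∈ Icc (-T) T, HasDerivWithinAt x (vf b lam (x t)) (Icc (-T) T) t

lemma Sol.mono {b lam θ₀ T T' : ℝ} {x : ℝ → ℝ × ℝ} (h : Sol b lam θ₀ T x)
    (h1 : 0 ≤ T') (h2 : T' ≤ T) : Sol b lam θ₀ T' x :=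
  ⟨h.1, fun t ht => (h.2 t ⟨by linarith [ht.1], by linarith [ht.2]⟩).mono
    (Icc_subset_Icc (by linarith) h2)⟩

lemma lip_on (v : ℝ × ℝ → ℝ × ℝ) (hv : ContDiff ℝ 1 v) (s : Set (ℝ × ℝ))
    (hs : Convex ℝ s) (hc : IsCompact s) : ∃ L : NNReal, LipschitzOnWith L v s := by
  obtain ⟨L, hL⟩ := hc.exists_bound_of_continuousOn
    ((hv.continuous_fderiv one_ne_zero).norm.continuousOn)
  refine ⟨Real.toNNReal L, hs.lipschitzOnWith_of_nnnorm_fderiv_le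
    (fun x _ => (hv.differentiable one_ne_zero).differentiableAt) ?_⟩
  intro x hx
  rw [← NNReal.coe_le_coe]
  calc ((‖fderiv ℝ v x‖₊ : NNReal) : ℝ) = ‖fderiv ℝ v x‖ := rfl
    _ ≤ L := by simpa using hL x hx
    _ ≤ ((Real.toNNReal L : NNReal) : ℝ) := by rw [Real.coe_toNNReal']; exact le_max_left _ _

lemma uniform_step (v : ℝ × ℝ → ℝ × ℝ) (hv : ContDiff ℝ 1 v) (ρ : ℝ) :
    ∃ ε > (0:ℝ), ∀ t₀ : ℝ, ∀ x₀ : ℝ × ℝ, ‖x₀‖ ≤ ρ →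
      ∃ f : ℝ → ℝ × ℝ, f t₀ = x₀ ∧ ∀ t ∈ Icc (t₀ - ε) (t₀ + ε),
        HasDerivWithinAt f (v (f t)) (Icc (t₀ - ε) (t₀ + ε)) t := by
  set B : Set (ℝ × ℝ) := closedBall 0 (|ρ| + 1) with hB
  have hBc : IsCompact B := isCompact_closedBall _ _
  obtain ⟨C, hC⟩ := hBc.exists_bound_of_continuousOn (hv.continuous.continuousOn)
  have h0B : (0 : ℝ × ℝ) ∈ B := mem_closedBall_self (by positivity)
  have hC0 : 0 ≤ C := le_trans (norm_nonneg _) (hC 0 h0B)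
  obtain ⟨L, hlip⟩ := lip_on v hv B (convex_closedBall _ _) hBc
  set ε : ℝ := 1 / (C + 1) with hε
  have hε0 : 0 < ε := by rw [hε]; positivity
  refine ⟨ε, hε0, fun t₀ x₀ hx₀ => ?_⟩
  have hball : closedBall x₀ 1 ⊆ B := by
    apply closedBall_subset_closedBall'
    rw [dist_zero_right]
    have : ‖x₀‖ ≤ |ρ| := le_trans hx₀ (le_abs_self ρ)
    linarith
  have hball' : closedBall x₀ ((1:ℝ≥0):ℝ) ⊆ B := by rw [NNReal.coe_one]; exact hball
  have hpl : IsPicardLindelof (fun _ => v) (tmin := t₀ - ε) (tmax := t₀ + ε)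
      ⟨t₀, by constructor <;> linarith⟩ x₀ 1 0 (Real.toNNReal C) L :=
    { lipschitzOnWith := fun t _ => hlip.mono hball'
      continuousOn := fun x _ => continuousOn_const
      norm_le := fun t _ x hx => by rw [Real.coe_toNNReal _ hC0]; exact hC x (hball' hx)
      mul_max_le := by
        show (Real.toNNReal C : ℝ) * max (t₀ + ε - t₀) (t₀ - (t₀ - ε)) ≤ ((1:ℝ≥0):ℝ) - ((0:ℝ≥0):ℝ)
        rw [Real.coe_toNNReal _ hC0, NNReal.coe_one, NNReal.coe_zero, sub_zero]
        have h1 : t₀ + ε - t₀ = ε := by ring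
        have h2 : t₀ - (t₀ - ε) = ε := by ring
        rw [h1, h2, max_self, hε, mul_one_div]
        exact (div_le_one (by linarith)).mpr (by linarith) }
  obtain ⟨f, hf0, hf⟩ := hpl.exists_eq_forall_mem_Icc_hasDerivWithinAt₀
  exact ⟨f, hf0, fun t ht => hf t ht⟩

lemma glue_sol {v : ℝ × ℝ → ℝ × ℝ} {f g : ℝ → ℝ × ℝ} {a b c : ℝ} (hab : a ≤ b) (hbc : b ≤ c)
    (hf : ∀ t ∈ Icc a b, HasDerivWithinAt f (v (f t)) (Icc a b) t)
    (hg : ∀ t ∈ Icc b c, HasDerivWithinAt g (v (g t)) (Icc b c) t)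
    (hfg : f b = g b) :
    ∃ h : ℝ → ℝ × ℝ, (∀ t ∈ Icc a b, h t = f t) ∧ (∀ t ∈ Icc b c, h t = g t) ∧
      ∀ t ∈ Icc a c, HasDerivWithinAt h (v (h t)) (Icc a c) t := by
  classical
  set h : ℝ → ℝ × ℝ := fun t => if t ≤ b then f t else g t with hh
  have he1 : ∀ t ∈ Icc a b, h t = f t := fun t ht => if_pos ht.2
  have he2 : ∀ t ∈ Icc b c, h t = g t := by
    intro t ht
    rcases eq_or_lt_of_le ht.1 with h1 | h1
    · rw [hh]; simp only; rw [← h1, if_pos le_rfl, hfg]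
    · exact if_neg (not_le.mpr h1)
  refine ⟨h, he1, he2, ?_⟩
  intro t ht
  rcases lt_trichotomy t b with hlt | heq | hgt
  · have htab : t ∈ Icc a b := ⟨ht.1, hlt.le⟩
    have d1 := (hf t htab).congr (fun y hy => he1 y hy) (he1 t htab)
    rw [← he1 t htab] at d1
    refine d1.mono_of_mem_nhdsWithin ?_
    rw [mem_nhdsWithin]
    exact ⟨Iio b, isOpen_Iio, hlt, fun y hy => ⟨hy.2.1, hy.1.le⟩⟩
  · have htab : t ∈ Icc a b := ⟨ht.1, heq.le⟩
    have htbc : t ∈ Icc b c := ⟨heq.ge, ht.2⟩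
    have d1 := (hf t htab).congr (fun y hy => he1 y hy) (he1 t htab)
    have d2 := (hg t htbc).congr (fun y hy => he2 y hy) (he2 t htbc)
    rw [← he1 t htab] at d1
    rw [← he2 t htbc] at d2
    have hu := d1.union d2
    rwa [Icc_union_Icc_eq_Icc hab hbc] at hu
  · have htbc : t ∈ Icc b c := ⟨hgt.le, ht.2⟩
    have d1 := (hg t htbc).congr (fun y hy => he2 y hy) (he2 t htbc)
    rw [← he2 t htbc] at d1
    refine d1.mono_of_mem_nhdsWithin ?_
    rw [mem_nhdsWithin]
    exact ⟨Ioi b, isOpen_Ioi, hgt, fun y hy => ⟨hy.1.le, hy.2.2⟩⟩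

lemma apriori (b lam θ₀ : ℝ) (hθ₀ : Real.sin θ₀ ≠ 0) (k : ℤ)
    (hk₁ : (k : ℝ) * π < θ₀) (hk₂ : θ₀ < ((k : ℝ) + 1) * π)
    (T : ℝ) (hT : 0 ≤ T) (x : ℝ → ℝ × ℝ) (hx : Sol b lam θ₀ T x) :
    ∀ t ∈ Icc (-T) T, ‖x t‖ ≤ max T ((|(k : ℝ)| + 1) * π) := by
  obtain ⟨hx0, hx'⟩ := hx
  set z : ℝ → ℝ := fun t => (x t).1 with hzdef
  set θ : ℝ → ℝ := fun t => (x t).2 with hθdef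
  have hz' : ∀ t ∈ Icc (-T) T, HasDerivWithinAt z (Real.sin (θ t)) (Icc (-T) T) t := by
    intro t ht
    have := (ContinuousLinearMap.fst ℝ ℝ ℝ).hasFDerivAt.comp_hasDerivWithinAt t (hx' t ht)
    simp [vf] at this; exact this
  have hθ' : ∀ t ∈ Icc (-T) T,
      HasDerivWithinAt θ (Real.sin (θ t) * Gc b lam (z t) (θ t)) (Icc (-T) T) t := by
    intro t ht
    have := (ContinuousLinearMap.snd ℝ ℝ ℝ).hasFDerivAt.comp_hasDerivWithinAt t (hx' t ht)
    simp [vf] at this; exact this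
  have h0mem : (0:ℝ) ∈ Icc (-T) T := ⟨by linarith, hT⟩
  have hθ0 : θ 0 = θ₀ := by rw [hθdef]; simp only; rw [hx0]
  have hz0 : z 0 = 0 := by rw [hzdef]; simp only; rw [hx0]
  have hbar := barrier b lam θ₀ hθ₀ k hk₁ hk₂ (Icc (-T) T) Set.ordConnected_Icc h0mem
    z θ hθ0 hz' hθ'
  intro t ht
  have hzb : |z t| ≤ T := by
    have hb1 := Convex.norm_image_sub_le_of_norm_hasDerivWithin_le (C := 1)
      hz' (fun s _ => by
        rw [Real.norm_eq_abs]
        exact abs_le.mpr ⟨Real.neg_one_le_sin _, Real.sin_le_one _⟩)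
      (convex_Icc _ _) h0mem ht
    rw [hz0, sub_zero, sub_zero, one_mul, Real.norm_eq_abs, Real.norm_eq_abs] at hb1
    have : |t| ≤ T := abs_le.mpr ⟨by linarith [ht.1], ht.2⟩
    linarith
  have hπ := Real.pi_pos
  have hθb : |θ t| ≤ (|(k:ℝ)| + 1) * π := by
    obtain ⟨-, h1, h2⟩ := hbar t ht
    have e1 : -((|(k:ℝ)|+1) * π) ≤ (k:ℝ) * π := by nlinarith [neg_abs_le (k:ℝ)]
    have e2 : ((k:ℝ)+1) * π ≤ (|(k:ℝ)|+1) * π := by nlinarith [le_abs_self (k:ℝ)]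
    rw [abs_le]
    constructor <;> nlinarith
  rw [Prod.norm_def]
  apply max_le
  · rw [Real.norm_eq_abs]; exact le_trans hzb (le_max_left _ _)
  · rw [Real.norm_eq_abs]; exact le_trans hθb (le_max_right _ _)

lemma uniq (b lam θ₀ : ℝ) (hθ₀ : Real.sin θ₀ ≠ 0) (k : ℤ)
    (hk₁ : (k : ℝ) * π < θ₀) (hk₂ : θ₀ < ((k : ℝ) + 1) * π)
    (T : ℝ) (hT : 0 < T) (x₁ x₂ : ℝ → ℝ × ℝ)
    (h1 : Sol b lam θ₀ T x₁) (h2 : Sol b lam θ₀ T x₂) :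
    EqOn x₁ x₂ (Icc (-T) T) := by
  set ρ := max T ((|(k:ℝ)| + 1) * π) with hρ
  set B := closedBall (0 : ℝ × ℝ) ρ with hB
  obtain ⟨L, hlip⟩ := lip_on _ (contDiff_vf b lam) B (convex_closedBall _ _)
    (isCompact_closedBall _ _)
  have hmem : ∀ (x : ℝ → ℝ × ℝ), Sol b lam θ₀ T x → ∀ t ∈ Ioo (-T) T, x t ∈ B := by
    intro x hx t ht
    rw [hB, mem_closedBall_zero_iff]
    exact apriori b lam θ₀ hθ₀ k hk₁ hk₂ T hT.le x hx t (Ioo_subset_Icc_self ht)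
  have hdiff : ∀ (x : ℝ → ℝ × ℝ), Sol b lam θ₀ T x →
      ∀ t ∈ Ioo (-T) T, HasDerivAt x (vf b lam (x t)) t :=
    fun x hx t ht => (hx.2 t (Ioo_subset_Icc_self ht)).hasDerivAt (Icc_mem_nhds ht.1 ht.2)
  exact ODE_solution_unique_of_mem_Icc (v := fun _ p => vf b lam p) (s := fun _ => B)
    (fun _ _ => hlip) (⟨by linarith, hT⟩ : (0:ℝ) ∈ Ioo (-T) T)
    (fun t ht => (h1.2 t ht).continuousWithinAt)
    (hdiff x₁ h1) (hmem x₁ h1)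
    (fun t ht => (h2.2 t ht).continuousWithinAt)
    (hdiff x₂ h2) (hmem x₂ h2)
    (by rw [h1.1, h2.1])

lemma extend (b lam θ₀ : ℝ) (hθ₀ : Real.sin θ₀ ≠ 0) (k : ℤ)
    (hk₁ : (k : ℝ) * π < θ₀) (hk₂ : θ₀ < ((k : ℝ) + 1) * π)
    {ρ ε T : ℝ} (hT : 0 ≤ T) (hε : 0 < ε)
    (hρ : max T ((|(k:ℝ)| + 1) * π) ≤ ρ)
    (hstep : ∀ t₀ : ℝ, ∀ x₀ : ℝ × ℝ, ‖x₀‖ ≤ ρ →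
      ∃ f : ℝ → ℝ × ℝ, f t₀ = x₀ ∧ ∀ t ∈ Icc (t₀ - ε) (t₀ + ε),
        HasDerivWithinAt f (vf b lam (f t)) (Icc (t₀ - ε) (t₀ + ε)) t)
    (x : ℝ → ℝ × ℝ) (hx : Sol b lam θ₀ T x) : ∃ x', Sol b lam θ₀ (T + ε) x' := by
  have hbound := apriori b lam θ₀ hθ₀ k hk₁ hk₂ T hT x hx
  have hmemR : ‖x T‖ ≤ ρ := le_trans (hbound T ⟨by linarith, le_rfl⟩) hρ
  have hmemL : ‖x (-T)‖ ≤ ρ := le_trans (hbound (-T) ⟨le_rfl, by linarith⟩) hρ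
  obtain ⟨f, hf0, hf⟩ := hstep T (x T) hmemR
  have hfr : ∀ t ∈ Icc T (T + ε), HasDerivWithinAt f (vf b lam (f t)) (Icc T (T + ε)) t := by
    intro t ht
    exact (hf t ⟨by linarith [ht.1], ht.2⟩).mono (Icc_subset_Icc (by linarith) le_rfl)
  obtain ⟨h₁, he1, he2, hd1⟩ := glue_sol (by linarith : -T ≤ T) (by linarith : T ≤ T + ε)
    hx.2 hfr hf0.symm
  obtain ⟨g, hg0, hg⟩ := hstep (-T) (x (-T)) hmemL
  have hgl : ∀ t ∈ Icc (-T - ε) (-T), HasDerivWithinAt g (vf b lam (g t)) (Icc (-T - ε) (-T)) t := by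
    intro t ht
    exact (hg t ⟨ht.1, by linarith [ht.2]⟩).mono (Icc_subset_Icc le_rfl (by linarith))
  have hval : g (-T) = h₁ (-T) := by rw [hg0, he1 (-T) ⟨le_rfl, by linarith⟩]
  obtain ⟨h₂, hf1, hf2, hd2⟩ := glue_sol (by linarith : -T - ε ≤ -T) (by linarith : -T ≤ T + ε)
    hgl hd1 hval
  refine ⟨h₂, ?_, ?_⟩
  · rw [hf2 0 ⟨by linarith, by linarith⟩, he1 0 ⟨by linarith, hT⟩, hx.1]
  · have heq : Icc (-(T + ε)) (T + ε) = Icc (-T - ε) (T + ε) := by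
      rw [show -(T + ε) = -T - ε by ring]
    rw [heq]
    exact hd2

lemma global (b lam θ₀ : ℝ) (hθ₀ : Real.sin θ₀ ≠ 0) (k : ℤ)
    (hk₁ : (k : ℝ) * π < θ₀) (hk₂ : θ₀ < ((k : ℝ) + 1) * π) :
    ∃ x : ℝ → ℝ × ℝ, x 0 = (0, θ₀) ∧ ∀ t : ℝ, HasDerivAt x (vf b lam (x t)) t := by
  have hπ := Real.pi_pos
  have hθ₀b : ‖((0:ℝ), θ₀)‖ ≤ (|(k:ℝ)| + 1) * π := by
    rw [Prod.norm_def]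
    apply max_le
    · rw [Real.norm_eq_abs, abs_zero]; positivity
    · rw [Real.norm_eq_abs, abs_le]
      have e1 : -((|(k:ℝ)|+1) * π) ≤ (k:ℝ) * π := by nlinarith [neg_abs_le (k:ℝ)]
      have e2 : ((k:ℝ)+1) * π ≤ (|(k:ℝ)|+1) * π := by nlinarith [le_abs_self (k:ℝ)]
      constructor <;> nlinarith
  have hsolN : ∀ m : ℕ, ∃ x, Sol b lam θ₀ (m : ℝ) x := by
    intro m
    induction m with
    | zero =>
      obtain ⟨ε, hε, hstep⟩ := uniform_step (vf b lam) (contDiff_vf b lam) ((|(k:ℝ)| + 1) * π)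
      obtain ⟨f, hf0, hf⟩ := hstep 0 (0, θ₀) hθ₀b
      have hSol : Sol b lam θ₀ ε f := by
        refine ⟨hf0, ?_⟩
        have : Icc (0 - ε) (0 + ε) = Icc (-ε) ε := by rw [zero_sub, zero_add]
        rw [← this]
        exact hf
      exact ⟨f, by simpa using hSol.mono le_rfl hε.le⟩
    | succ m ih =>
      obtain ⟨ε, hε, hstep⟩ := uniform_step (vf b lam) (contDiff_vf b lam)
        (max ((m:ℝ) + 1) ((|(k:ℝ)| + 1) * π))
      have key : ∀ j : ℕ, ∃ x, Sol b lam θ₀ (min ((m:ℝ) + j * ε) ((m:ℝ) + 1)) x := by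
        intro j
        induction j with
        | zero =>
          have e : min ((m:ℝ) + (0:ℕ) * ε) ((m:ℝ) + 1) = (m:ℝ) := by
            rw [Nat.cast_zero, zero_mul, add_zero]
            exact min_eq_left (by linarith)
          rw [e]; exact ih
        | succ j ihj =>
          obtain ⟨x, hx⟩ := ihj
          set T := min ((m:ℝ) + j * ε) ((m:ℝ) + 1) with hTdef
          have hT0 : 0 ≤ T := le_min (by positivity) (by positivity)
          rcases le_or_gt ((m:ℝ) + 1) ((m:ℝ) + j * ε) with hc | hc
          · have e1 : T = (m:ℝ) + 1 := min_eq_right hc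
            have e2 : min ((m:ℝ) + (j + 1 : ℕ) * ε) ((m:ℝ) + 1) = (m:ℝ) + 1 := by
              apply min_eq_right
              push_cast
              nlinarith
            rw [e2, ← e1]
            exact ⟨x, hx⟩
          · have e1 : T = (m:ℝ) + j * ε := min_eq_left hc.le
            have hρ : max T ((|(k:ℝ)| + 1) * π) ≤ max ((m:ℝ) + 1) ((|(k:ℝ)| + 1) * π) :=
              max_le_max (min_le_right _ _) le_rfl
            obtain ⟨x', hx'⟩ := extend b lam θ₀ hθ₀ k hk₁ hk₂ hT0 hε hρ hstep x hx
            refine ⟨x', hx'.mono (le_min (by positivity) (by positivity)) ?_⟩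
            calc min ((m:ℝ) + (j + 1 : ℕ) * ε) ((m:ℝ) + 1) ≤ (m:ℝ) + (j + 1 : ℕ) * ε :=
                  min_le_left _ _
              _ = T + ε := by rw [e1]; push_cast; ring
      obtain ⟨x, hx⟩ := key ⌈1 / ε⌉₊
      have hce : (1:ℝ) ≤ (⌈1 / ε⌉₊ : ℝ) * ε := by
        have h1 : 1 / ε ≤ (⌈1 / ε⌉₊ : ℝ) := Nat.le_ceil _
        calc (1:ℝ) = (1 / ε) * ε := by field_simp
          _ ≤ (⌈1 / ε⌉₊ : ℝ) * ε := by nlinarith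
      have e : min ((m:ℝ) + (⌈1 / ε⌉₊ : ℕ) * ε) ((m:ℝ) + 1) = (m:ℝ) + 1 :=
        min_eq_right (by linarith)
      rw [e] at hx
      exact ⟨x, by push_cast; exact hx⟩
  choose xs hxs using hsolN
  have agree : ∀ p q : ℕ, ∀ t : ℝ, |t| < p → |t| < q → xs p t = xs q t := by
    intro p q t hp hq
    set T : ℝ := min (p:ℝ) (q:ℝ) with hTdef
    have hT : 0 < T := lt_min (lt_of_le_of_lt (abs_nonneg t) hp) (lt_of_le_of_lt (abs_nonneg t) hq)
    have h1 : Sol b lam θ₀ T (xs p) := (hxs p).mono hT.le (min_le_left _ _)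
    have h2 : Sol b lam θ₀ T (xs q) := (hxs q).mono hT.le (min_le_right _ _)
    have habs : |t| ≤ T := le_of_lt (lt_min hp hq)
    exact uniq b lam θ₀ hθ₀ k hk₁ hk₂ T hT _ _ h1 h2
      ⟨by linarith [neg_abs_le t], by linarith [le_abs_self t]⟩
  refine ⟨fun t => xs (⌈|t|⌉₊ + 1) t, ?_, ?_⟩
  · show xs (⌈|(0:ℝ)|⌉₊ + 1) 0 = (0, θ₀)
    have h0 : (⌈|(0:ℝ)|⌉₊ + 1) = 1 := by norm_num
    rw [h0]
    exact (hxs 1).1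
  · intro t
    have hlt : ∀ t' : ℝ, |t'| < ((⌈|t'|⌉₊ + 1 : ℕ) : ℝ) := by
      intro t'; push_cast
      exact lt_of_le_of_lt (Nat.le_ceil _) (by linarith)
    set m := ⌈|t|⌉₊ + 1 with hm
    have htm : |t| < (m:ℝ) := hlt t
    have hev : (fun t => xs (⌈|t|⌉₊ + 1) t) =ᶠ[𝓝 t] xs m := by
      have hU : Ioo (-(m:ℝ)) (m:ℝ) ∈ 𝓝 t :=
        Ioo_mem_nhds (by linarith [neg_abs_le t]) (by linarith [le_abs_self t])
      filter_upwards [hU] with t' ht'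
      have h1 : |t'| < (m:ℝ) := abs_lt.mpr ⟨by linarith [ht'.1], ht'.2⟩
      exact agree _ m t' (hlt t') h1
    have hd : HasDerivAt (xs m) (vf b lam (xs m t)) t :=
      ((hxs m).2 t ⟨by linarith [neg_abs_le t], by linarith [le_abs_self t]⟩).hasDerivAt
        (Icc_mem_nhds (by linarith [neg_abs_le t]) (by linarith [le_abs_self t]))
    have hfin := hd.congr_of_eventuallyEq hev
    have hXt : (fun t => xs (⌈|t|⌉₊ + 1) t) t = xs m t := rfl
    rwa [← hXt] at hfin

end Stmt18Helper

end

open Set Metric Stmt18Helper in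
theorem stmt18 (b lam θ₀ : ℝ) (hb : b ≠ 0) (hθ₀ : Real.sin θ₀ ≠ 0)
    (k : ℤ) (hk₁ : (k : ℝ) * π < θ₀) (hk₂ : θ₀ < ((k : ℝ) + 1) * π)
    (F : ℝ → ℝ → ℝ)
    (hF : ∀ zv θv : ℝ, F zv θv =
      Real.sin θv / (Real.exp (4 * zv) + b ^ 2) *
        (b ^ 2 * (2 * Real.sin θv * Real.cos θv -
          lam * Real.exp (-zv) * Real.sin θv ^ 2) - lam * Real.exp (3 * zv))) :
    -- (i) any solution on an interval containing 0 stays in (kπ, (k+1)π)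
    (∀ (I : Set ℝ), I.OrdConnected → (0 : ℝ) ∈ I →
      ∀ y z θ : ℝ → ℝ,
        y 0 = 0 → z 0 = 0 → θ 0 = θ₀ →
        (∀ s ∈ I, HasDerivWithinAt y (Real.exp (z s) * Real.cos (θ s)) I s) →
        (∀ s ∈ I, HasDerivWithinAt z (Real.sin (θ s)) I s) →
        (∀ s ∈ I, HasDerivWithinAt θ (F (z s) (θ s)) I s) →
        ∀ s ∈ I, (k : ℝ) * π < θ s ∧ θ s < ((k : ℝ) + 1) * π) ∧
    -- (ii) existence of a global solution
    (∃ y z θ : ℝ → ℝ,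
      y 0 = 0 ∧ z 0 = 0 ∧ θ 0 = θ₀ ∧
      (∀ s : ℝ, HasDerivAt y (Real.exp (z s) * Real.cos (θ s)) s) ∧
      (∀ s : ℝ, HasDerivAt z (Real.sin (θ s)) s) ∧
      (∀ s : ℝ, HasDerivAt θ (F (z s) (θ s)) s)) ∧
    -- (iii) and (iv) for any global solution
    (∀ y z θ : ℝ → ℝ,
      y 0 = 0 → z 0 = 0 → θ 0 = θ₀ →
      (∀ s : ℝ, HasDerivAt y (Real.exp (z s) * Real.cos (θ s)) s) →
      (∀ s : ℝ, HasDerivAt z (Real.sin (θ s)) s) →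
      (∀ s : ℝ, HasDerivAt θ (F (z s) (θ s)) s) →
      (∀ s : ℝ, Real.sin (θ s) ≠ 0) ∧
      (StrictMono z ∨ StrictAnti z) ∧
      (lam ≠ 0 → {s : ℝ | Real.cos (θ s) = 0}.Subsingleton)) := by
  have hFG : ∀ zv θv : ℝ, F zv θv = Real.sin θv * Gc b lam zv θv := by
    intro zv θv
    rw [hF]
    unfold Gc
    ring
  refine ⟨?_, ?_, ?_⟩
  · -- part (i)
    intro I hI h0I y z θ hy0 hz0 hθ0 hy' hz' hθ'
    have hθ'' : ∀ s ∈ I, HasDerivWithinAt θ (Real.sin (θ s) * Gc b lam (z s) (θ s)) I s := by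
      intro s hs
      rw [← hFG]
      exact hθ' s hs
    exact fun s hs => (barrier b lam θ₀ hθ₀ k hk₁ hk₂ I hI h0I z θ hθ0 hz' hθ'' s hs).2
  · -- part (ii)
    obtain ⟨X, hX0, hX'⟩ := global b lam θ₀ hθ₀ k hk₁ hk₂
    set z : ℝ → ℝ := fun t => (X t).1 with hzdef
    set θ : ℝ → ℝ := fun t => (X t).2 with hθdef
    have hz' : ∀ s : ℝ, HasDerivAt z (Real.sin (θ s)) s := by
      intro s
      have := (ContinuousLinearMap.fst ℝ ℝ ℝ).hasFDerivAt.comp_hasDerivAt s (hX' s)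
      simp [vf] at this; exact this
    have hθ' : ∀ s : ℝ, HasDerivAt θ (F (z s) (θ s)) s := by
      intro s
      have := (ContinuousLinearMap.snd ℝ ℝ ℝ).hasFDerivAt.comp_hasDerivAt s (hX' s)
      rw [hFG]
      simp [vf] at this; exact this
    have hzc : Continuous z := by
      rw [continuous_iff_continuousAt]; exact fun s => (hz' s).continuousAt
    have hθc : Continuous θ := by
      rw [continuous_iff_continuousAt]
      intro s
      exact (hθ' s).continuousAt
    have hgc : Continuous fun t => Real.exp (z t) * Real.cos (θ t) :=
      (Real.continuous_exp.comp hzc).mul (Real.continuous_cos.comp hθc)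
    refine ⟨fun s => ∫ τ in (0:ℝ)..s, Real.exp (z τ) * Real.cos (θ τ), z, θ,
      intervalIntegral.integral_same, ?_, ?_, ?_, hz', hθ'⟩
    · show (X 0).1 = 0
      rw [hX0]
    · show (X 0).2 = θ₀
      rw [hX0]
    · intro s
      exact intervalIntegral.integral_hasDerivAt_right (hgc.intervalIntegrable _ _)
        (hgc.stronglyMeasurableAtFilter _ _) hgc.continuousAt
  · -- parts (iii) and (iv)
    intro y z θ hy0 hz0 hθ0 hy' hz' hθ'
    have hθG : ∀ s ∈ (univ : Set ℝ),
        HasDerivWithinAt θ (Real.sin (θ s) * Gc b lam (z s) (θ s)) univ s := by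
      intro s _
      rw [← hFG]
      exact (hθ' s).hasDerivWithinAt
    have hzG : ∀ s ∈ (univ : Set ℝ), HasDerivWithinAt z (Real.sin (θ s)) univ s :=
      fun s _ => (hz' s).hasDerivWithinAt
    have hbar := barrier b lam θ₀ hθ₀ k hk₁ hk₂ univ Set.ordConnected_univ (mem_univ 0)
      z θ hθ0 hzG hθG
    have hsin : ∀ s, Real.sin (θ s) ≠ 0 := fun s => (hbar s (mem_univ s)).1
    have hθc : Continuous θ := by
      rw [continuous_iff_continuousAt]; exact fun s => (hθ' s).continuousAt
    refine ⟨hsin, ?_, ?_⟩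
    · have hfc : Continuous fun s => Real.sin (θ s) := Real.continuous_sin.comp hθc
      have hzd : ∀ s, deriv z s = Real.sin (θ s) := fun s => (hz' s).deriv
      rcases (hsin 0).lt_or_gt with hneg | hpos
      · right
        apply strictAnti_of_deriv_neg
        intro s
        rw [hzd]
        have := sign_persist (f := fun s => -Real.sin (θ s)) hfc.neg
          (fun s => neg_ne_zero.mpr (hsin s)) (s := 0) (t := s)
          (by show (0:ℝ) < -Real.sin (θ 0); linarith)
        have h2 : (0:ℝ) < -Real.sin (θ s) := this
        linarith
      · left
        apply strictMono_of_deriv_pos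
        intro s
        rw [hzd]
        exact sign_persist hfc hsin hpos
    · intro hlam
      have hden : ∀ s, (0:ℝ) < Real.exp (4 * z s) + b ^ 2 := fun s => by positivity
      have hsq : ∀ s, Real.cos (θ s) = 0 → Real.sin (θ s) = 1 ∨ Real.sin (θ s) = -1 := by
        intro s hcs
        have h1 := Real.sin_sq_add_cos_sq (θ s)
        have h2 : (Real.sin (θ s) - 1) * (Real.sin (θ s) + 1) = 0 := by nlinarith
        rcases mul_eq_zero.mp h2 with h | h
        · left; linarith
        · right; linarith
      rcases hlam.lt_or_gt with hneg | hpos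
      · have hset : {s : ℝ | Real.cos (θ s) = 0} = {s : ℝ | -Real.cos (θ s) = 0} := by
          ext s; simp [neg_eq_zero]
        rw [hset]
        apply zeros_subsingleton (H := fun s => Real.sin (θ s) * F (z s) (θ s))
        · intro s
          have h1 := ((Real.hasDerivAt_cos (θ s)).comp s (hθ' s)).neg
          have h2 : Real.sin (θ s) * F (z s) (θ s) = -(-Real.sin (θ s) * F (z s) (θ s)) := by ring
          rw [h2]
          simp [Function.comp] at h1; exact h1.congr_deriv (by ring)
        · intro s hs0
          have hcs : Real.cos (θ s) = 0 := by
            have : -Real.cos (θ s) = 0 := hs0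
            linarith
          rcases hsq s hcs with h | h
          · have key : Real.sin (θ s) * F (z s) (θ s)
                = -lam * (b ^ 2 * Real.exp (-z s) + Real.exp (3 * z s))
                  / (Real.exp (4 * z s) + b ^ 2) := by
              rw [hF, hcs, h]; ring
            rw [key]
            exact div_pos (mul_pos (by linarith) (by positivity)) (hden s)
          · have key : Real.sin (θ s) * F (z s) (θ s)
                = -lam * (b ^ 2 * Real.exp (-z s) + Real.exp (3 * z s))
                  / (Real.exp (4 * z s) + b ^ 2) := by
              rw [hF, hcs, h]; ring
            rw [key]
            exact div_pos (mul_pos (by linarith) (by positivity)) (hden s)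
      · apply zeros_subsingleton (H := fun s => -Real.sin (θ s) * F (z s) (θ s))
        · intro s
          have h1 := (Real.hasDerivAt_cos (θ s)).comp s (hθ' s)
          simp [Function.comp] at h1; exact h1.congr_deriv (by ring)
        · intro s hs0
          have hcs : Real.cos (θ s) = 0 := hs0
          rcases hsq s hcs with h | h
          · have key : -Real.sin (θ s) * F (z s) (θ s)
                = lam * (b ^ 2 * Real.exp (-z s) + Real.exp (3 * z s))
                  / (Real.exp (4 * z s) + b ^ 2) := by
              rw [hF, hcs, h]; ring
            rw [key]
            exact div_pos (mul_pos hpos (by positivity)) (hden s)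
          · have key : -Real.sin (θ s) * F (z s) (θ s)
                = lam * (b ^ 2 * Real.exp (-z s) + Real.exp (3 * z s))
                  / (Real.exp (4 * z s) + b ^ 2) := by
              rw [hF, hcs, h]; ring
            rw [key]
            exact div_pos (mul_pos hpos (by positivity)) (hden s)
end
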